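/- For even n ≥ 2, both B_n^+(s,t) and B_n^-(s,t) are gamma positive with center of symmetry n/2: each equals Σ_i γ_i (st)^i (s+t)^{n-2i} with γ_i ≥ 0; moreover for odd n ≥ 2 neither polynomial is palindromic. -/

import Mathlib

open Finset

/-- number of descents of a permutation of `Fin n` (one-line notation). -/
def desA {n : ℕ} (π : Equiv.Perm (Fin n)) : ℕ :=
  (Finset.univ.filter (fun i : Fin (n-1) =>
    π ⟨i.1+1, by have := i.2; omega⟩ < π ⟨i.1, by have := i.2; omega⟩)).card

/-- number of ascents. -/
def ascA {n : ℕ} (π : Equiv.Perm (Fin n)) : ℕ :=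
  (Finset.univ.filter (fun i : Fin (n-1) =>
    π ⟨i.1, by have := i.2; omega⟩ < π ⟨i.1+1, by have := i.2; omega⟩)).card

/-- number of inversions. -/
def invA {n : ℕ} (π : Equiv.Perm (Fin n)) : ℕ :=
  (Finset.univ.filter (fun p : Fin n × Fin n => p.1 < p.2 ∧ π p.2 < π p.1)).card

/-- bivariate Eulerian polynomial over all of `S_n`; variable 0 is `s`, variable 1 is `t`. -/
noncomputable def Abiv (n : ℕ) : MvPolynomial (Fin 2) ℚ :=
  ∑ π : Equiv.Perm (Fin n), MvPolynomial.X 1 ^ desA π * MvPolynomial.X 0 ^ ascA π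

noncomputable def AbivP (n : ℕ) : MvPolynomial (Fin 2) ℚ :=
  ∑ π ∈ Finset.univ.filter (fun π : Equiv.Perm (Fin n) => Equiv.Perm.sign π = 1),
    MvPolynomial.X 1 ^ desA π * MvPolynomial.X 0 ^ ascA π

noncomputable def AbivM (n : ℕ) : MvPolynomial (Fin 2) ℚ :=
  ∑ π ∈ Finset.univ.filter (fun π : Equiv.Perm (Fin n) => Equiv.Perm.sign π = -1),
    MvPolynomial.X 1 ^ desA π * MvPolynomial.X 0 ^ ascA π

noncomputable def Auni (n : ℕ) : Polynomial ℚ :=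
  ∑ π : Equiv.Perm (Fin n), Polynomial.X ^ desA π

noncomputable def AuniP (n : ℕ) : Polynomial ℚ :=
  ∑ π ∈ Finset.univ.filter (fun π : Equiv.Perm (Fin n) => Equiv.Perm.sign π = 1),
    Polynomial.X ^ desA π

noncomputable def AuniM (n : ℕ) : Polynomial ℚ :=
  ∑ π ∈ Finset.univ.filter (fun π : Equiv.Perm (Fin n) => Equiv.Perm.sign π = -1),
    Polynomial.X ^ desA π

/-- the operator `∂/∂s + ∂/∂t`. -/
noncomputable def Dop (f : MvPolynomial (Fin 2) ℚ) : MvPolynomial (Fin 2) ℚ :=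
  MvPolynomial.pderiv 0 f + MvPolynomial.pderiv 1 f

/-- A univariate polynomial is palindromic: with `r` the least exponent with nonzero
coefficient and `n` the degree, `a_{r+i} = a_{n-i}`. -/
def Palind (f : Polynomial ℚ) : Prop :=
  ∀ i ≤ f.natDegree - f.natTrailingDegree,
    f.coeff (f.natTrailingDegree + i) = f.coeff (f.natDegree - i)

/-- bivariate gamma positivity with center of symmetry `N/2`. -/
def BivGamma (f : MvPolynomial (Fin 2) ℚ) (N : ℕ) : Prop :=
  ∃ γ : ℕ → ℕ, (∀ i, γ i ≠ 0 → 2*i ≤ N) ∧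
    f = ∑ i ∈ Finset.range (N+1), (γ i : MvPolynomial (Fin 2) ℚ) *
      ((MvPolynomial.X 0 * MvPolynomial.X 1)^i * (MvPolynomial.X 0 + MvPolynomial.X 1)^(N - 2*i))

/-- univariate gamma positivity with center of symmetry `c2/2`. -/
def UniGamma (f : Polynomial ℚ) (c2 : ℕ) : Prop :=
  ∃ γ : ℕ → ℕ, (∀ i, γ i ≠ 0 → 2*i ≤ c2) ∧
    f = ∑ i ∈ Finset.range (c2+1), (γ i : ℚ) •
      (Polynomial.X^i * (1 + Polynomial.X)^(c2 - 2*i))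

/-- signed permutations: a permutation together with a sign for each position. -/
abbrev SignedPerm (n : ℕ) := Equiv.Perm (Fin n) × (Fin n → Bool)

/-- the one-line word of a signed permutation, 1-indexed, with `bw w 0 = 0`;
entry `i` is `±(w.1 i + 1)` viewed in `{-n,…,-1,1,…,n}`. -/
def bw {n : ℕ} (w : SignedPerm n) (i : ℕ) : ℤ :=
  if h : 1 ≤ i ∧ i ≤ n then
    (if w.2 ⟨i-1, by omega⟩ then -(((w.1 ⟨i-1, by omega⟩ : ℕ) : ℤ) + 1)
     else ((w.1 ⟨i-1, by omega⟩ : ℕ) : ℤ) + 1)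
  else 0

/-- type-B descents (including a possible descent at position 0). -/
def desB {n : ℕ} (w : SignedPerm n) : ℕ :=
  ((Finset.range n).filter (fun i => bw w (i+1) < bw w i)).card

/-- type-B inversions (length). -/
def invB {n : ℕ} (w : SignedPerm n) : ℕ :=
  (Finset.univ.filter (fun p : Fin n × Fin n => p.1 < p.2 ∧ bw w (p.2.1+1) < bw w (p.1.1+1))).card
  + (Finset.univ.filter (fun p : Fin n × Fin n => p.1 < p.2 ∧ bw w (p.2.1+1) < -(bw w (p.1.1+1)))).card
  + (Finset.univ.filter (fun i : Fin n => bw w (i.1+1) < 0)).card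

/-- type-D inversions. -/
def invD {n : ℕ} (w : SignedPerm n) : ℕ :=
  (Finset.univ.filter (fun p : Fin n × Fin n => p.1 < p.2 ∧ bw w (p.2.1+1) < bw w (p.1.1+1))).card
  + (Finset.univ.filter (fun p : Fin n × Fin n => p.1 < p.2 ∧ bw w (p.2.1+1) < -(bw w (p.1.1+1)))).card

noncomputable def Bbiv (n : ℕ) : MvPolynomial (Fin 2) ℚ :=
  ∑ w : SignedPerm n, MvPolynomial.X 1 ^ desB w * MvPolynomial.X 0 ^ (n - desB w)

noncomputable def BbivP (n : ℕ) : MvPolynomial (Fin 2) ℚ :=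
  ∑ w ∈ Finset.univ.filter (fun w : SignedPerm n => Even (invB w)),
    MvPolynomial.X 1 ^ desB w * MvPolynomial.X 0 ^ (n - desB w)

noncomputable def BbivM (n : ℕ) : MvPolynomial (Fin 2) ℚ :=
  ∑ w ∈ Finset.univ.filter (fun w : SignedPerm n => ¬ Even (invB w)),
    MvPolynomial.X 1 ^ desB w * MvPolynomial.X 0 ^ (n - desB w)

noncomputable def BuniP (n : ℕ) : Polynomial ℚ :=
  ∑ w ∈ Finset.univ.filter (fun w : SignedPerm n => Even (invB w)), Polynomial.X ^ desB w

noncomputable def BuniM (n : ℕ) : Polynomial ℚ :=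
  ∑ w ∈ Finset.univ.filter (fun w : SignedPerm n => ¬ Even (invB w)), Polynomial.X ^ desB w

/-- deleting the largest letter from the one-line notation of `π ∈ S_{n+1}`
gives a permutation of `[n]`. -/
noncomputable def restrictMax {n : ℕ} (π : Equiv.Perm (Fin (n+1))) : Equiv.Perm (Fin n) :=
  Equiv.ofBijective
    (fun i => Fin.castPred (π ((π.symm (Fin.last n)).succAbove i))
      (by
        intro h
        have h2 : (π.symm (Fin.last n)).succAbove i = π.symm (Fin.last n) := by
          apply π.injective
          rw [h, Equiv.apply_symm_apply]
        exact Fin.succAbove_ne _ i h2))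
    (Finite.injective_iff_bijective.mp (by
      intro i j h
      have h2 : π ((π.symm (Fin.last n)).succAbove i) = π ((π.symm (Fin.last n)).succAbove j) :=
        Fin.castPred_inj.mp h
      have h3 := π.injective h2
      exact Fin.succAbove_right_injective h3))

/-- number of even permutations of `[n]` with `k` descents (`k : ℤ`). -/
noncomputable def aP (n : ℕ) (k : ℤ) : ℕ :=
  (Finset.univ.filter (fun π : Equiv.Perm (Fin n) =>
    Equiv.Perm.sign π = 1 ∧ (desA π : ℤ) = k)).card

/-- number of odd permutations of `[n]` with `k` descents. -/
noncomputable def aM (n : ℕ) (k : ℤ) : ℕ :=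
  (Finset.univ.filter (fun π : Equiv.Perm (Fin n) =>
    Equiv.Perm.sign π = -1 ∧ (desA π : ℤ) = k)).card
namespace TB

open Finset

lemma bw_zero {n : ℕ} (w : SignedPerm n) : bw w 0 = 0 := by simp [bw]

lemma bw_ub {n : ℕ} (w : SignedPerm n) (j : ℕ) : bw w j ≤ n := by
  unfold bw
  split
  · have := (w.1 ⟨j-1, by omega⟩).2
    split <;> omega
  · positivity

lemma bw_lb {n : ℕ} (w : SignedPerm n) (j : ℕ) : -(n:ℤ) ≤ bw w j := by
  unfold bw
  split
  · have := (w.1 ⟨j-1, by omega⟩).2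
    split <;> omega
  · simp

lemma desB_eq_sum {n : ℕ} (w : SignedPerm n) :
    desB w = ∑ i ∈ range n, ite (bw w (i+1) < bw w i) 1 0 :=
  Finset.card_filter _ _

lemma splice {M : Type*} [AddCommMonoid M] (f : ℕ → M) (N t : ℕ) (h : t ≤ N) :
    ∑ i ∈ range (N+1), f i
      = ((∑ i ∈ range t, f i) + f t) + ∑ i ∈ range (N - t), f (t+1+i) := by
  have e : N + 1 = (t+1) + (N - t) := by omega
  rw [e, Finset.sum_range_add, Finset.sum_range_succ]

lemma shift_insert {M : Type*} [AddCommMonoid M] (f : ℕ → M) (N t : ℕ) (h : t ≤ N) :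
    ∑ i ∈ range (N+1), f i
      = f t + ∑ i ∈ range N, f (if i < t then i else i + 1) := by
  rw [splice f N t h]
  have e2 : ∑ i ∈ range N, f (if i < t then i else i + 1)
      = (∑ i ∈ range t, f i) + ∑ i ∈ range (N - t), f (t+1+i) := by
    have e3 := Finset.sum_range_add (fun i => f (if i < t then i else i + 1)) t (N-t)
    rw [Nat.add_sub_cancel' h] at e3
    rw [e3]
    congr 1
    · exact Finset.sum_congr rfl (fun i hi => by
        rw [if_pos (Finset.mem_range.mp hi)])
    · refine Finset.sum_congr rfl (fun i _ => ?_)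
      rw [if_neg (by omega)]
      congr 1
      omega
  rw [e2]
  abel

lemma card_pairs {N : ℕ} (P : ℕ → ℕ → Prop) [∀ i j : ℕ, Decidable (P i j)] :
    (Finset.univ.filter (fun p : Fin N × Fin N => P p.1.1 p.2.1)).card
      = ∑ i ∈ range N, ∑ j ∈ range N, ite (P i j) 1 0 := by
  rw [Finset.card_filter]
  rw [Fintype.sum_prod_type]
  rw [← Fin.sum_univ_eq_sum_range]
  refine Finset.sum_congr rfl (fun i _ => ?_)
  rw [← Fin.sum_univ_eq_sum_range]

end TB
namespace TB2
open Finset TB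

def insF {n : ℕ} (w : SignedPerm n) (p : Fin (n+1)) (ε : Bool) : SignedPerm (n+1) :=
  ((finSuccEquiv' p).trans ((Equiv.optionCongr w.1).trans (finSuccEquiv' (Fin.last n)).symm),
   fun j => ((finSuccEquiv' p) j).elim ε w.2)

lemma insF_perm_at {n : ℕ} (w : SignedPerm n) (p : Fin (n+1)) (ε : Bool) :
    (insF w p ε).1 p = Fin.last n := by
  simp [insF, finSuccEquiv'_at]

lemma insF_perm_succAbove {n : ℕ} (w : SignedPerm n) (p : Fin (n+1)) (ε : Bool) (i : Fin n) :
    (insF w p ε).1 (p.succAbove i) = Fin.castSucc (w.1 i) := by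
  simp only [insF, Equiv.trans_apply, finSuccEquiv'_succAbove, Equiv.optionCongr_apply,
    Option.map_some]
  exact finSuccEquiv'_symm_some_below (Fin.castSucc_lt_last _)

lemma insF_sign_at {n : ℕ} (w : SignedPerm n) (p : Fin (n+1)) (ε : Bool) :
    (insF w p ε).2 p = ε := by
  simp [insF, finSuccEquiv'_at]

lemma insF_sign_succAbove {n : ℕ} (w : SignedPerm n) (p : Fin (n+1)) (ε : Bool) (i : Fin n) :
    (insF w p ε).2 (p.succAbove i) = w.2 i := by
  simp [insF, finSuccEquiv'_succAbove]

lemma bw_val {n : ℕ} (w : SignedPerm n) (k : Fin n) :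
    bw w (k.1+1) = if w.2 k then -(((w.1 k : ℕ):ℤ)+1) else ((w.1 k : ℕ):ℤ)+1 := by
  unfold bw
  rw [dif_pos ⟨by omega, by have := k.2; omega⟩]
  simp only [Nat.add_sub_cancel, Fin.eta]

lemma bw_insF {n : ℕ} (w : SignedPerm n) (p : Fin (n+1)) (ε : Bool) (j : ℕ)
    (h1 : 1 ≤ j) (h2 : j ≤ n+1) :
    bw (insF w p ε) j =
      if j = p.1 + 1 then (if ε then -((n:ℤ)+1) else ((n:ℤ)+1))
      else if j ≤ p.1 then bw w j else bw w (j-1) := by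
  rcases Nat.lt_trichotomy j (p.1+1) with hj | hj | hj
  · -- j ≤ p.1
    rw [if_neg (by omega), if_pos (by omega)]
    set i : Fin n := ⟨j-1, by have := p.2; omega⟩ with hi
    have e1 : j = (Fin.castSucc i).1 + 1 := by simp [hi]; omega
    have e2 : j = i.1 + 1 := by simp [hi]; omega
    have e3 : Fin.castSucc i = p.succAbove i :=
      (Fin.succAbove_of_castSucc_lt p i (by simp [hi, Fin.lt_def]; omega)).symm
    conv_lhs => rw [e1, bw_val]
    rw [e3, insF_perm_succAbove, insF_sign_succAbove]
    conv_rhs => rw [e2, bw_val]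
    simp
  · -- j = p.1+1
    rw [if_pos hj]
    have e1 : j = p.1 + 1 := hj
    have e2 : (⟨j-1, by omega⟩ : Fin (n+1)) = p := Fin.ext (by simp; omega)
    have e3 : j = (⟨j-1, by omega⟩ : Fin (n+1)).1 + 1 := by simp; omega
    rw [e3, bw_val, e2, insF_perm_at, insF_sign_at]
    simp [Fin.val_last]
  · -- j ≥ p.1+2
    rw [if_neg (by omega), if_neg (by omega)]
    set i : Fin n := ⟨j-2, by omega⟩ with hi
    have e1 : j = (Fin.succ i).1 + 1 := by simp [hi]; omega
    have e3 : Fin.succ i = p.succAbove i :=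
      (Fin.succAbove_of_le_castSucc p i (by simp [hi, Fin.le_def]; omega)).symm
    conv_lhs => rw [e1, bw_val]
    rw [e3, insF_perm_succAbove, insF_sign_succAbove]
    have e2 : j - 1 = i.1 + 1 := by simp [hi]; omega
    conv_rhs => rw [e2, bw_val]
    simp

end TB2
namespace TB3
open Finset TB TB2

lemma restrictMax_apply {n : ℕ} (π : Equiv.Perm (Fin (n+1))) (i : Fin n) :
    restrictMax π i = Fin.castPred (π ((π.symm (Fin.last n)).succAbove i))
      (by
        intro h
        have h2 : (π.symm (Fin.last n)).succAbove i = π.symm (Fin.last n) := by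
          apply π.injective
          rw [h, Equiv.apply_symm_apply]
        exact Fin.succAbove_ne _ i h2) := rfl

noncomputable def insEquiv (n : ℕ) : (SignedPerm n × (Fin (n+1) × Bool)) ≃ SignedPerm (n+1) where
  toFun x := insF x.1 x.2.1 x.2.2
  invFun W :=
    ((restrictMax W.1, fun i => W.2 ((W.1.symm (Fin.last n)).succAbove i)),
      (W.1.symm (Fin.last n), W.2 (W.1.symm (Fin.last n))))
  left_inv := by
    rintro ⟨w, p, ε⟩
    have hp : (insF w p ε).1.symm (Fin.last n) = p := by
      rw [Equiv.symm_apply_eq, insF_perm_at]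
    refine Prod.ext (Prod.ext ?_ ?_) (Prod.ext ?_ ?_) <;> simp only
    · apply Equiv.ext; intro i
      apply Fin.ext
      rw [restrictMax_apply]
      rw [Fin.coe_castPred]
      rw [hp, insF_perm_succAbove]
      rfl
    · funext i
      rw [hp, insF_sign_succAbove]
    · exact hp
    · rw [hp, insF_sign_at]
  right_inv := by
    intro W
    set p := W.1.symm (Fin.last n) with hp
    have hWp : W.1 p = Fin.last n := Equiv.apply_symm_apply _ _
    refine Prod.ext ?_ ?_ <;> simp only
    · apply Equiv.ext; intro j
      rcases eq_or_ne j p with rfl | hj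
      · rw [insF_perm_at, hWp]
      · obtain ⟨i, rfl⟩ := Fin.exists_succAbove_eq hj
        rw [insF_perm_succAbove]
        simp only [restrictMax_apply]
        rw [Fin.castSucc_castPred]
    · funext j
      rcases eq_or_ne j p with rfl | hj
      · rw [insF_sign_at]
      · obtain ⟨i, rfl⟩ := Fin.exists_succAbove_eq hj
        rw [insF_sign_succAbove]

end TB3
namespace TB4
open Finset TB TB2

section
variable {n : ℕ} (w : SignedPerm n) (p : Fin (n+1)) (ε : Bool)

lemma insF_at : bw (insF w p ε) (p.1+1) = (if ε then -((n:ℤ)+1) else ((n:ℤ)+1)) := by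
  rw [bw_insF w p ε _ (by omega) (by have := p.2; omega), if_pos rfl]

lemma insF_low : ∀ j ≤ p.1, bw (insF w p ε) j = bw w j := by
  intro j hj
  rcases Nat.eq_zero_or_pos j with rfl | hj1
  · rw [bw_zero, bw_zero]
  · rw [bw_insF w p ε _ (by omega) (by have := p.2; omega), if_neg (by omega), if_pos hj]

lemma insF_high : ∀ j, p.1+1 < j → j ≤ n+1 → bw (insF w p ε) j = bw w (j-1) := by
  intro j hj1 hj2
  rw [bw_insF w p ε _ (by omega) hj2, if_neg (by omega), if_neg (by omega)]

lemma desB_insF_lt (hp : p.1 < n) :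
    desB (insF w p ε) + (if bw w (p.1+1) < bw w p.1 then 1 else 0) = desB w + 1 := by
  set W := insF w p ε with hW
  set q := p.1 with hq
  have hsW : desB W = ((∑ i ∈ range q, ite (bw W (i+1) < bw W i) 1 0)
      + ite (bw W (q+1) < bw W q) 1 0)
      + ∑ i ∈ range (n-q), ite (bw W (q+1+i+1) < bw W (q+1+i)) 1 0 := by
    rw [desB_eq_sum, splice (fun i => ite (bw W (i+1) < bw W i) 1 0) n q (le_of_lt hp)]
  have hsw : desB w = ((∑ i ∈ range q, ite (bw w (i+1) < bw w i) 1 0)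
      + ite (bw w (q+1) < bw w q) 1 0)
      + ∑ i ∈ range (n-1-q), ite (bw w (q+1+i+1) < bw w (q+1+i)) 1 0 := by
    rw [desB_eq_sum]
    have h2 := splice (fun i => ite (bw w (i+1) < bw w i) 1 0) (n-1) q (by omega)
    rw [show n-1+1 = n from by omega] at h2
    rw [h2]
  have e1 : ∑ i ∈ range q, ite (bw W (i+1) < bw W i) 1 0
      = ∑ i ∈ range q, ite (bw w (i+1) < bw w i) 1 0 := by
    refine Finset.sum_congr rfl (fun i hi => ?_)
    have hi' := Finset.mem_range.mp hi
    rw [insF_low w p ε (i+1) (by omega), insF_low w p ε i (by omega)]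
  have e2 : ite (bw W (q+1) < bw W q) (1:ℕ) 0 = if ε then 1 else 0 := by
    rw [insF_at, insF_low w p ε q (by omega)]
    cases ε
    · simp only [Bool.false_eq_true, if_false]
      rw [if_neg (by have := bw_ub w q; omega)]
    · simp only [if_true]
      rw [if_pos (by have := bw_lb w q; omega)]
  have e3 : ∑ i ∈ range (n-q), ite (bw W (q+1+i+1) < bw W (q+1+i)) (1:ℕ) 0
      = (∑ i ∈ range (n-1-q), ite (bw w (q+1+i+1) < bw w (q+1+i)) 1 0) + (if ε then 0 else 1) := by
    rw [show n - q = (n-1-q)+1 from by omega]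
    rw [Finset.sum_range_succ' (fun i => ite (bw W (q+1+i+1) < bw W (q+1+i)) (1:ℕ) 0) (n-1-q)]
    congr 1
    · refine Finset.sum_congr rfl (fun i hi => ?_)
      have hi' := Finset.mem_range.mp hi
      rw [insF_high w p ε (q+1+(i+1)+1) (by omega) (by omega),
          insF_high w p ε (q+1+(i+1)) (by omega) (by omega)]
      congr 2 <;> omega
    · rw [show q+1+0+1 = q+1+1 from rfl, show q+1+0 = q+1 from rfl]
      rw [insF_high w p ε (q+1+1) (by omega) (by omega), insF_at]
      rw [show q+1+1-1 = q+1 from by omega]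
      cases ε
      · simp only [Bool.false_eq_true, if_false]
        rw [if_pos (by have := bw_ub w (q+1); omega)]
      · simp only [if_true]
        rw [if_neg (by have := bw_lb w (q+1); omega)]
  rw [hsW, hsw, e1, e2, e3]
  cases ε <;> simp <;> omega

lemma desB_insF_last :
    desB (insF w (Fin.last n) ε) = desB w + (if ε then 1 else 0) := by
  set W := insF w (Fin.last n) ε with hW
  rw [desB_eq_sum, Finset.sum_range_succ]
  have e1 : ∑ i ∈ range n, ite (bw W (i+1) < bw W i) (1:ℕ) 0
      = ∑ i ∈ range n, ite (bw w (i+1) < bw w i) 1 0 := by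
    refine Finset.sum_congr rfl (fun i hi => ?_)
    have hi' := Finset.mem_range.mp hi
    rw [insF_low w (Fin.last n) ε (i+1) (by simp [Fin.last]; omega),
        insF_low w (Fin.last n) ε i (by simp [Fin.last]; omega)]
  have e2 : ite (bw W (n+1) < bw W n) (1:ℕ) 0 = if ε then 1 else 0 := by
    have h1 : bw W ((Fin.last n).1 + 1) = _ := insF_at w (Fin.last n) ε
    simp only [Fin.val_last] at h1
    rw [h1, insF_low w (Fin.last n) ε n (by simp [Fin.last])]
    cases ε
    · simp only [Bool.false_eq_true, if_false]
      rw [if_neg (by have := bw_ub w n; omega)]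
    · simp only [if_true]
      rw [if_pos (by have := bw_lb w n; omega)]
  rw [e1, e2, ← desB_eq_sum]

end
end TB4
namespace TB5
open Finset TB TB2 TB4

lemma count_lt (q N : ℕ) : ∑ i ∈ range N, (if i < q then (1:ℕ) else 0) = min q N := by
  induction N with
  | zero => simp
  | succ N ih => rw [Finset.sum_range_succ, ih]; split_ifs <;> omega

lemma count_ge (q N : ℕ) : ∑ i ∈ range N, (if q ≤ i then (1:ℕ) else 0) = N - q := by
  induction N with
  | zero => simp
  | succ N ih => rw [Finset.sum_range_succ, ih]; split_ifs <;> omega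

lemma invB_eq_sum {n : ℕ} (w : SignedPerm n) :
    invB w = ((∑ i ∈ range n, ∑ j ∈ range n, if (i < j ∧ bw w (j+1) < bw w (i+1)) then 1 else 0)
      + ∑ i ∈ range n, ∑ j ∈ range n, if (i < j ∧ bw w (j+1) < -(bw w (i+1))) then 1 else 0)
      + ∑ i ∈ range n, if bw w (i+1) < 0 then 1 else 0 := by
  unfold invB
  congr 1
  · congr 1
    · rw [Finset.card_filter, Fintype.sum_prod_type,
        ← Fin.sum_univ_eq_sum_range (fun i => ∑ j ∈ range n,
          if (i < j ∧ bw w (j+1) < bw w (i+1)) then 1 else 0) n]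
      refine Finset.sum_congr rfl (fun i _ => ?_)
      rw [← Fin.sum_univ_eq_sum_range (fun j => if (i.1 < j ∧ bw w (j+1) < bw w (i.1+1)) then 1 else 0) n]
      refine Finset.sum_congr rfl (fun j _ => ?_)
      exact if_congr (and_congr_left' Fin.lt_def) rfl rfl
    · rw [Finset.card_filter, Fintype.sum_prod_type,
        ← Fin.sum_univ_eq_sum_range (fun i => ∑ j ∈ range n,
          if (i < j ∧ bw w (j+1) < -(bw w (i+1))) then 1 else 0) n]
      refine Finset.sum_congr rfl (fun i _ => ?_)
      rw [← Fin.sum_univ_eq_sum_range (fun j => if (i.1 < j ∧ bw w (j+1) < -(bw w (i.1+1))) then 1 else 0) n]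
      refine Finset.sum_congr rfl (fun j _ => ?_)
      exact if_congr (and_congr_left' Fin.lt_def) rfl rfl
  · rw [Finset.card_filter,
      ← Fin.sum_univ_eq_sum_range (fun i => if bw w (i+1) < 0 then 1 else 0) n]

section
variable {n : ℕ} (w : SignedPerm n) (p : Fin (n+1)) (ε : Bool)

lemma invB_insF :
    invB (insF w p ε) = invB w + (if ε then n + p.1 + 1 else n - p.1) := by
  have hq : p.1 ≤ n := by have := p.2; omega
  set W := insF w p ε with hW
  set q := p.1 with hq'
  have hAt : bw W (q+1) = (if ε then -((n:ℤ)+1) else ((n:ℤ)+1)) := insF_at w p ε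
  have hval : ∀ k, k < n → bw W ((if k < q then k else k+1)+1) = bw w (k+1) := by
    intro k hk
    split_ifs with h
    · exact insF_low w p ε (k+1) (by omega)
    · rw [insF_high w p ε (k+1+1) (by omega) (by omega)]
      simp
  rw [invB_eq_sum W, invB_eq_sum w]
  have part3 : (∑ i ∈ range (n+1), if bw W (i+1) < 0 then (1:ℕ) else 0)
      = (∑ i ∈ range n, if bw w (i+1) < 0 then 1 else 0) + (if ε then 1 else 0) := by
    rw [shift_insert (fun i => if bw W (i+1) < 0 then (1:ℕ) else 0) n q hq]
    have h1 : (if bw W (q+1) < 0 then (1:ℕ) else 0) = (if ε then 1 else 0) := by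
      rw [hAt]
      cases ε
      · simp only [Bool.false_eq_true, if_false]
        rw [if_neg (by omega)]
      · simp only [if_true]
        rw [if_pos (by omega)]
    have h2 : (∑ i ∈ range n, if bw W ((if i < q then i else i+1)+1) < 0 then (1:ℕ) else 0)
        = ∑ i ∈ range n, if bw w (i+1) < 0 then 1 else 0 := by
      refine Finset.sum_congr rfl (fun i hi => ?_)
      rw [hval i (mem_range.mp hi)]
    rw [h1, h2]; omega
  have part1 : (∑ i ∈ range (n+1), ∑ j ∈ range (n+1),
        if (i < j ∧ bw W (j+1) < bw W (i+1)) then (1:ℕ) else 0)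
      = (∑ i ∈ range n, ∑ j ∈ range n, if (i < j ∧ bw w (j+1) < bw w (i+1)) then 1 else 0)
        + (if ε then q else n - q) := by
    rw [shift_insert (fun i => ∑ j ∈ range (n+1),
      if (i < j ∧ bw W (j+1) < bw W (i+1)) then (1:ℕ) else 0) n q hq]
    have hfq : (∑ j ∈ range (n+1), if (q < j ∧ bw W (j+1) < bw W (q+1)) then (1:ℕ) else 0)
        = (if ε then 0 else n - q) := by
      rw [shift_insert (fun j => if (q < j ∧ bw W (j+1) < bw W (q+1)) then (1:ℕ) else 0) n q hq]
      rw [if_neg (by omega)]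
      have h2 : (∑ j ∈ range n,
          if (q < (if j < q then j else j+1) ∧ bw W ((if j < q then j else j+1)+1) < bw W (q+1)) then (1:ℕ) else 0)
          = ∑ j ∈ range n, (if ε then 0 else if q ≤ j then (1:ℕ) else 0) := by
        refine Finset.sum_congr rfl (fun j hj => ?_)
        rw [hval j (mem_range.mp hj), hAt]
        have hub := bw_ub w (j+1)
        have hlb := bw_lb w (j+1)
        cases ε
        · simp only [Bool.false_eq_true, if_false]
          by_cases hjq : q ≤ j
          · rw [if_pos ⟨by split_ifs <;> omega, by omega⟩, if_pos hjq]
          · rw [if_neg (by rw [if_pos (by omega)]; omega), if_neg hjq]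
        · simp only [if_true]
          rw [if_neg (by rintro ⟨-, hc⟩; omega)]
      rw [h2]
      cases ε
      · simp only [Bool.false_eq_true, if_false]
        rw [count_ge]; omega
      · simp
    have hfe : ∀ i ∈ range n, (∑ j ∈ range (n+1),
          if ((if i < q then i else i+1) < j ∧ bw W (j+1) < bw W ((if i < q then i else i+1)+1)) then (1:ℕ) else 0)
        = (∑ j ∈ range n, if (i < j ∧ bw w (j+1) < bw w (i+1)) then 1 else 0)
          + (if ε then (if i < q then 1 else 0) else 0) := by
      intro i hi
      have hin := mem_range.mp hi
      rw [shift_insert (fun j =>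
        if ((if i < q then i else i+1) < j ∧ bw W (j+1) < bw W ((if i < q then i else i+1)+1)) then (1:ℕ) else 0) n q hq]
      rw [hval i hin, hAt]
      have hub := bw_ub w (i+1)
      have hlb := bw_lb w (i+1)
      have h1 : (if ((if i < q then i else i+1) < q ∧ (if ε then -((n:ℤ)+1) else ((n:ℤ)+1)) < bw w (i+1)) then (1:ℕ) else 0)
          = (if ε then (if i < q then 1 else 0) else 0) := by
        cases ε
        · simp only [Bool.false_eq_true, if_false]
          rw [if_neg (by rintro ⟨-, hc⟩; omega)]
        · simp only [if_true]
          by_cases hiq : i < q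
          · rw [if_pos ⟨by rw [if_pos hiq]; omega, by omega⟩, if_pos hiq]
          · rw [if_neg (by rw [if_neg hiq]; rintro ⟨hc, -⟩; omega), if_neg hiq]
      have h2 : (∑ j ∈ range n,
          if ((if i < q then i else i+1) < (if j < q then j else j+1) ∧ bw W ((if j < q then j else j+1)+1) < bw w (i+1)) then (1:ℕ) else 0)
          = ∑ j ∈ range n, if (i < j ∧ bw w (j+1) < bw w (i+1)) then 1 else 0 := by
        refine Finset.sum_congr rfl (fun j hj => ?_)
        rw [hval j (mem_range.mp hj)]
        exact if_congr (and_congr_left' (by split_ifs <;> omega)) rfl rfl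
      rw [h1, h2]; omega
    rw [hfq, Finset.sum_congr rfl hfe, Finset.sum_add_distrib]
    have h3 : (∑ i ∈ range n, if ε then (if i < q then (1:ℕ) else 0) else 0)
        = (if ε then q else 0) := by
      cases ε
      · simp
      · simp only [if_true]; rw [count_lt]; omega
    rw [h3]
    cases ε <;> simp <;> omega
  have part2 : (∑ i ∈ range (n+1), ∑ j ∈ range (n+1),
        if (i < j ∧ bw W (j+1) < -(bw W (i+1))) then (1:ℕ) else 0)
      = (∑ i ∈ range n, ∑ j ∈ range n, if (i < j ∧ bw w (j+1) < -(bw w (i+1))) then 1 else 0)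
        + (if ε then n else 0) := by
    rw [shift_insert (fun i => ∑ j ∈ range (n+1),
      if (i < j ∧ bw W (j+1) < -(bw W (i+1))) then (1:ℕ) else 0) n q hq]
    have hfq : (∑ j ∈ range (n+1), if (q < j ∧ bw W (j+1) < -(bw W (q+1))) then (1:ℕ) else 0)
        = (if ε then n - q else 0) := by
      rw [shift_insert (fun j => if (q < j ∧ bw W (j+1) < -(bw W (q+1))) then (1:ℕ) else 0) n q hq]
      rw [if_neg (by omega)]
      have h2 : (∑ j ∈ range n,
          if (q < (if j < q then j else j+1) ∧ bw W ((if j < q then j else j+1)+1) < -(bw W (q+1))) then (1:ℕ) else 0)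
          = ∑ j ∈ range n, (if ε then (if q ≤ j then (1:ℕ) else 0) else 0) := by
        refine Finset.sum_congr rfl (fun j hj => ?_)
        rw [hval j (mem_range.mp hj), hAt]
        have hub := bw_ub w (j+1)
        have hlb := bw_lb w (j+1)
        cases ε
        · simp only [Bool.false_eq_true, if_false]
          rw [if_neg (by rintro ⟨-, hc⟩; omega)]
        · simp only [if_true]
          by_cases hjq : q ≤ j
          · rw [if_pos ⟨by split_ifs <;> omega, by omega⟩, if_pos hjq]
          · rw [if_neg (by rw [if_pos (by omega)]; omega), if_neg hjq]
      rw [h2]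
      cases ε
      · simp
      · simp only [if_true]; rw [count_ge]; omega
    have hfe : ∀ i ∈ range n, (∑ j ∈ range (n+1),
          if ((if i < q then i else i+1) < j ∧ bw W (j+1) < -(bw W ((if i < q then i else i+1)+1))) then (1:ℕ) else 0)
        = (∑ j ∈ range n, if (i < j ∧ bw w (j+1) < -(bw w (i+1))) then 1 else 0)
          + (if ε then (if i < q then 1 else 0) else 0) := by
      intro i hi
      have hin := mem_range.mp hi
      rw [shift_insert (fun j =>
        if ((if i < q then i else i+1) < j ∧ bw W (j+1) < -(bw W ((if i < q then i else i+1)+1))) then (1:ℕ) else 0) n q hq]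
      rw [hval i hin, hAt]
      have hub := bw_ub w (i+1)
      have hlb := bw_lb w (i+1)
      have h1 : (if ((if i < q then i else i+1) < q ∧ (if ε then -((n:ℤ)+1) else ((n:ℤ)+1)) < -(bw w (i+1))) then (1:ℕ) else 0)
          = (if ε then (if i < q then 1 else 0) else 0) := by
        cases ε
        · simp only [Bool.false_eq_true, if_false]
          rw [if_neg (by rintro ⟨-, hc⟩; omega)]
        · simp only [if_true]
          by_cases hiq : i < q
          · rw [if_pos ⟨by rw [if_pos hiq]; omega, by omega⟩, if_pos hiq]
          · rw [if_neg (by rw [if_neg hiq]; rintro ⟨hc, -⟩; omega), if_neg hiq]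
      have h2 : (∑ j ∈ range n,
          if ((if i < q then i else i+1) < (if j < q then j else j+1) ∧ bw W ((if j < q then j else j+1)+1) < -(bw w (i+1))) then (1:ℕ) else 0)
          = ∑ j ∈ range n, if (i < j ∧ bw w (j+1) < -(bw w (i+1))) then 1 else 0 := by
        refine Finset.sum_congr rfl (fun j hj => ?_)
        rw [hval j (mem_range.mp hj)]
        exact if_congr (and_congr_left' (by split_ifs <;> omega)) rfl rfl
      rw [h1, h2]; omega
    rw [hfq, Finset.sum_congr rfl hfe, Finset.sum_add_distrib]
    have h3 : (∑ i ∈ range n, if ε then (if i < q then (1:ℕ) else 0) else 0)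
        = (if ε then q else 0) := by
      cases ε
      · simp
      · simp only [if_true]; rw [count_lt]; omega
    rw [h3]
    cases ε <;> simp <;> omega
  rw [part1, part2, part3]
  cases ε <;> simp <;> omega

end
end TB5
namespace TB6
open Finset TB TB2 TB3 TB4 TB5 MvPolynomial

lemma desB_le {n : ℕ} (w : SignedPerm n) : desB w ≤ n := by
  have := Finset.card_filter_le (range n) (fun i => bw w (i+1) < bw w i)
  simpa [desB] using this

lemma card_fin {N : ℕ} (Q : ℕ → Prop) [DecidablePred Q] :
    (Finset.univ.filter (fun i : Fin N => Q i.1)).card = ((range N).filter Q).card := by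
  rw [Finset.card_filter, Finset.card_filter,
    ← Fin.sum_univ_eq_sum_range (fun i => if Q i then 1 else 0) N]

noncomputable def Btilde (n : ℕ) : MvPolynomial (Fin 2) ℚ :=
  ∑ w : SignedPerm n, ((-1:ℚ)^(invB w)) • (X 1 ^ desB w * X 0 ^ (n - desB w))

lemma Dop_mono (d e : ℕ) :
    Dop ((X 1 : MvPolynomial (Fin 2) ℚ) ^ d * X 0 ^ e)
      = e • ((X 1 : MvPolynomial (Fin 2) ℚ) ^ d * X 0 ^ (e-1))
        + d • ((X 1 : MvPolynomial (Fin 2) ℚ) ^ (d-1) * X 0 ^ e) := by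
  unfold Dop
  rw [Derivation.leibniz, Derivation.leibniz]
  rw [Derivation.leibniz_pow, Derivation.leibniz_pow, Derivation.leibniz_pow,
    Derivation.leibniz_pow]
  rw [pderiv_X_self, pderiv_X_of_ne (by decide), pderiv_X_of_ne (by decide), pderiv_X_self]
  simp only [mul_one, mul_zero, smul_zero, zero_add, add_zero, smul_mul_assoc, mul_smul_comm,
    smul_eq_mul]
  ring

lemma key_alg (d e : ℕ) :
    d • (2 • ((X 1 : MvPolynomial (Fin 2) ℚ)^d * X 0^(e+1)))
      + e • (2 • ((X 1 : MvPolynomial (Fin 2) ℚ)^(d+1) * X 0^e))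
      + ((X 1 : MvPolynomial (Fin 2) ℚ)^(d+1) * X 0^e + X 1^d * X 0^(e+1))
    = (X 0 + X 1) * ((X 1 : MvPolynomial (Fin 2) ℚ)^d * X 0^e)
      + 2*(X 0*X 1) * (e • ((X 1 : MvPolynomial (Fin 2) ℚ)^d * X 0^(e-1))
          + d • ((X 1 : MvPolynomial (Fin 2) ℚ)^(d-1) * X 0^e)) := by
  rcases Nat.eq_zero_or_pos d with rfl | hd1 <;> rcases Nat.eq_zero_or_pos e with rfl | he1
  · simp only [zero_smul, smul_zero, zero_add, add_zero, pow_zero, one_mul, mul_one, pow_one]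
    ring
  · obtain ⟨e', rfl⟩ : ∃ e', e = e' + 1 := ⟨e - 1, by omega⟩
    simp only [Nat.add_sub_cancel, zero_smul, smul_zero, zero_add, add_zero, pow_zero, one_mul]
    rw [nsmul_eq_mul, nsmul_eq_mul, nsmul_eq_mul]
    push_cast
    ring
  · obtain ⟨d', rfl⟩ : ∃ d', d = d' + 1 := ⟨d - 1, by omega⟩
    simp only [Nat.add_sub_cancel, zero_smul, smul_zero, zero_add, add_zero, pow_zero, mul_one]
    rw [nsmul_eq_mul, nsmul_eq_mul, nsmul_eq_mul]
    push_cast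
    ring
  · obtain ⟨e', rfl⟩ : ∃ e', e = e' + 1 := ⟨e - 1, by omega⟩
    obtain ⟨d', rfl⟩ : ∃ d', d = d' + 1 := ⟨d - 1, by omega⟩
    simp only [Nat.add_sub_cancel]
    rw [nsmul_eq_mul, nsmul_eq_mul, nsmul_eq_mul, nsmul_eq_mul]
    push_cast
    ring

-- the fiber computation for Bbiv
lemma inner_sum (n : ℕ) (w : SignedPerm n) :
    (∑ p : Fin (n+1), ∑ ε : Bool,
        (X 1 : MvPolynomial (Fin 2) ℚ) ^ desB (insF w p ε) * X 0 ^ ((n+1) - desB (insF w p ε)))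
    = desB w • (2 • ((X 1 : MvPolynomial (Fin 2) ℚ)^(desB w) * X 0^(n+1-desB w)))
      + (n - desB w) • (2 • ((X 1 : MvPolynomial (Fin 2) ℚ)^(desB w+1) * X 0^(n-desB w)))
      + ((X 1 : MvPolynomial (Fin 2) ℚ)^(desB w+1) * X 0^(n-desB w)
          + X 1^(desB w) * X 0^(n+1-desB w)) := by
  have hd : desB w ≤ n := desB_le w
  rw [Fin.sum_univ_castSucc]
  have hlast : (∑ ε : Bool, (X 1 : MvPolynomial (Fin 2) ℚ) ^ desB (insF w (Fin.last n) ε)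
        * X 0 ^ ((n+1) - desB (insF w (Fin.last n) ε)))
      = (X 1 : MvPolynomial (Fin 2) ℚ)^(desB w+1) * X 0^(n-desB w)
          + X 1^(desB w) * X 0^(n+1-desB w) := by
    rw [Fintype.sum_bool, desB_insF_last w true, desB_insF_last w false]
    simp only [if_true, Bool.false_eq_true, if_false, Nat.add_zero, Nat.succ_sub_succ]
  have hcast : ∀ i : Fin n, (∑ ε : Bool, (X 1 : MvPolynomial (Fin 2) ℚ) ^ desB (insF w (Fin.castSucc i) ε)
        * X 0 ^ ((n+1) - desB (insF w (Fin.castSucc i) ε)))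
      = if bw w (i.1+1) < bw w i.1
          then 2 • ((X 1 : MvPolynomial (Fin 2) ℚ)^(desB w) * X 0^(n+1-desB w))
          else 2 • ((X 1 : MvPolynomial (Fin 2) ℚ)^(desB w+1) * X 0^(n-desB w)) := by
    intro i
    have hlt : (Fin.castSucc i).1 < n := i.2
    have h1 := desB_insF_lt w (Fin.castSucc i) true hlt
    have h2 := desB_insF_lt w (Fin.castSucc i) false hlt
    simp only [Fin.coe_castSucc] at h1 h2
    rw [Fintype.sum_bool]
    by_cases hdes : bw w (i.1+1) < bw w i.1
    · rw [if_pos hdes] at h1 h2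
      have e1 : desB (insF w (Fin.castSucc i) true) = desB w := by omega
      have e2 : desB (insF w (Fin.castSucc i) false) = desB w := by omega
      rw [e1, e2, if_pos hdes, two_smul]
    · rw [if_neg hdes] at h1 h2
      have e1 : desB (insF w (Fin.castSucc i) true) = desB w + 1 := by omega
      have e2 : desB (insF w (Fin.castSucc i) false) = desB w + 1 := by omega
      rw [e1, e2, if_neg hdes, two_smul]
      have e3 : n + 1 - (desB w + 1) = n - desB w := by omega
      rw [e3]
  rw [Finset.sum_congr rfl (fun i _ => hcast i), hlast]
  rw [Finset.sum_ite, Finset.sum_const, Finset.sum_const]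
  have c1 : (Finset.univ.filter (fun i : Fin n => bw w (i.1+1) < bw w i.1)).card = desB w := by
    rw [card_fin (fun m => bw w (m+1) < bw w m)]; rfl
  have c2 : (Finset.univ.filter (fun i : Fin n => ¬ (bw w (i.1+1) < bw w i.1))).card
      = n - desB w := by
    have := Finset.card_filter_add_card_filter_not
      (s := (Finset.univ : Finset (Fin n))) (p := fun i : Fin n => bw w (i.1+1) < bw w i.1)
    simp only [Finset.card_univ, Fintype.card_fin] at this
    omega
  rw [c1, c2]

lemma Bbiv_succ (n : ℕ) :
    Bbiv (n+1) = (X 0 + X 1) * Bbiv n + 2 * (X 0 * X 1) * Dop (Bbiv n) := by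
  have hD : Dop (Bbiv n) = ∑ w : SignedPerm n,
      Dop ((X 1 : MvPolynomial (Fin 2) ℚ) ^ desB w * X 0 ^ (n - desB w)) := by
    unfold Dop Bbiv
    rw [map_sum, map_sum, ← Finset.sum_add_distrib]
  have hR : (X 0 + X 1) * Bbiv n + 2 * (X 0 * X 1) * Dop (Bbiv n)
      = ∑ w : SignedPerm n, ((X 0 + X 1) * ((X 1 : MvPolynomial (Fin 2) ℚ) ^ desB w * X 0 ^ (n - desB w))
          + 2 * (X 0 * X 1) * Dop ((X 1 : MvPolynomial (Fin 2) ℚ) ^ desB w * X 0 ^ (n - desB w))) := by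
    rw [hD, Bbiv, Finset.mul_sum, Finset.mul_sum, ← Finset.sum_add_distrib]
  rw [hR, Bbiv]
  rw [← Equiv.sum_comp (insEquiv n)
    (fun W : SignedPerm (n+1) => (X 1 : MvPolynomial (Fin 2) ℚ) ^ desB W * X 0 ^ ((n+1) - desB W))]
  rw [Fintype.sum_prod_type]
  refine Finset.sum_congr rfl (fun w _ => ?_)
  have hinner : (∑ y : Fin (n+1) × Bool,
      (X 1 : MvPolynomial (Fin 2) ℚ) ^ desB (insEquiv n (w, y)) * X 0 ^ ((n+1) - desB (insEquiv n (w, y))))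
      = ∑ p : Fin (n+1), ∑ ε : Bool,
        (X 1 : MvPolynomial (Fin 2) ℚ) ^ desB (insF w p ε) * X 0 ^ ((n+1) - desB (insF w p ε)) := by
    rw [Fintype.sum_prod_type]
    rfl
  rw [hinner, inner_sum n w, Dop_mono]
  have hd : desB w ≤ n := desB_le w
  rw [show n + 1 - desB w = (n - desB w) + 1 from by omega]
  exact key_alg (desB w) (n - desB w)

end TB6
namespace TB7
open Finset TB TB2 TB3 TB4 TB5 TB6 MvPolynomial

lemma inner_sum_tilde (n : ℕ) (w : SignedPerm n) :
    (∑ p : Fin (n+1), ∑ ε : Bool, ((-1:ℚ)^(invB (insF w p ε))) •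
        ((X 1 : MvPolynomial (Fin 2) ℚ) ^ desB (insF w p ε) * X 0 ^ ((n+1) - desB (insF w p ε))))
    = ((-1:ℚ)^(invB w)) • ((X 0 - X 1) * ((X 1 : MvPolynomial (Fin 2) ℚ) ^ desB w * X 0 ^ (n - desB w))) := by
  have hd : desB w ≤ n := desB_le w
  rw [Fin.sum_univ_castSucc]
  have hcast : ∀ i : Fin n, (∑ ε : Bool, ((-1:ℚ)^(invB (insF w (Fin.castSucc i) ε))) •
      ((X 1 : MvPolynomial (Fin 2) ℚ) ^ desB (insF w (Fin.castSucc i) ε)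
        * X 0 ^ ((n+1) - desB (insF w (Fin.castSucc i) ε)))) = 0 := by
    intro i
    have hin : i.1 ≤ n := by omega
    rw [Fintype.sum_bool]
    have h1 := desB_insF_lt w (Fin.castSucc i) true i.2
    have h2 := desB_insF_lt w (Fin.castSucc i) false i.2
    have hdd : desB (insF w (Fin.castSucc i) true) = desB (insF w (Fin.castSucc i) false) := by
      omega
    have hi1 := invB_insF w (Fin.castSucc i) true
    have hi2 := invB_insF w (Fin.castSucc i) false
    simp only [if_true, Bool.false_eq_true, if_false, Fin.coe_castSucc] at hi1 hi2
    rw [hdd, hi1, hi2, ← add_smul]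
    have hsplit : invB w + (n + i.1 + 1) = (invB w + (n - i.1)) + (2*i.1+1) := by omega
    rw [hsplit, pow_add]
    have hneg : (-1:ℚ)^(2*i.1+1) = -1 := by
      rw [pow_succ, pow_mul]
      simp
    rw [hneg]
    simp
  rw [Finset.sum_congr rfl (fun i _ => hcast i), Finset.sum_const, smul_zero, zero_add]
  rw [Fintype.sum_bool]
  have h1 := desB_insF_last w true
  have h2 := desB_insF_last w false
  simp only [if_true, Bool.false_eq_true, if_false, Nat.add_zero] at h1 h2
  have hi1 := invB_insF w (Fin.last n) true
  have hi2 := invB_insF w (Fin.last n) false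
  simp only [if_true, Bool.false_eq_true, if_false, Fin.val_last, Nat.sub_self, Nat.add_zero] at hi1 hi2
  rw [h1, h2, hi1, hi2]
  have hneg : (-1:ℚ)^(invB w + (n + n + 1)) = -((-1:ℚ)^(invB w)) := by
    rw [pow_add]
    have : (-1:ℚ)^(n+n+1) = -1 := by
      rw [show n+n+1 = 2*n+1 from by omega, pow_succ, pow_mul]
      simp
    rw [this]; ring
  rw [hneg, Nat.succ_sub_succ]
  rw [show n + 1 - desB w = (n - desB w) + 1 from by omega]
  rw [smul_eq_C_mul, smul_eq_C_mul, smul_eq_C_mul]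
  simp only [map_neg]
  ring

lemma Btilde_succ (n : ℕ) : Btilde (n+1) = (X 0 - X 1) * Btilde n := by
  rw [Btilde, ← Equiv.sum_comp (insEquiv n)
    (fun W : SignedPerm (n+1) => ((-1:ℚ)^(invB W)) •
      ((X 1 : MvPolynomial (Fin 2) ℚ) ^ desB W * X 0 ^ ((n+1) - desB W))),
    Fintype.sum_prod_type]
  rw [Btilde, Finset.mul_sum]
  refine Finset.sum_congr rfl (fun w _ => ?_)
  have hinner : (∑ y : Fin (n+1) × Bool, ((-1:ℚ)^(invB (insEquiv n (w, y)))) •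
      ((X 1 : MvPolynomial (Fin 2) ℚ) ^ desB (insEquiv n (w, y)) * X 0 ^ ((n+1) - desB (insEquiv n (w, y)))))
      = ∑ p : Fin (n+1), ∑ ε : Bool, ((-1:ℚ)^(invB (insF w p ε))) •
        ((X 1 : MvPolynomial (Fin 2) ℚ) ^ desB (insF w p ε) * X 0 ^ ((n+1) - desB (insF w p ε))) := by
    rw [Fintype.sum_prod_type]
    rfl
  rw [hinner, inner_sum_tilde n w, mul_smul_comm]

lemma desB_zero (w : SignedPerm 0) : desB w = 0 := by simp [desB]

lemma invB_zero (w : SignedPerm 0) : invB w = 0 := by simp [invB]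

lemma card_signedPerm_zero : Fintype.card (SignedPerm 0) = 1 := by
  simp [Fintype.card_prod]

lemma Bbiv_zero : Bbiv 0 = 1 := by
  rw [Bbiv]
  rw [Finset.sum_congr rfl (fun w _ => by
    rw [desB_zero w]
    simp : ∀ w ∈ univ, (X 1 : MvPolynomial (Fin 2) ℚ) ^ desB w * X 0 ^ (0 - desB w) = 1)]
  rw [Finset.sum_const, Finset.card_univ, card_signedPerm_zero, one_smul]

lemma Btilde_zero : Btilde 0 = 1 := by
  rw [Btilde]
  rw [Finset.sum_congr rfl (fun w _ => by
    rw [desB_zero w, invB_zero w]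
    simp : ∀ w ∈ univ, ((-1:ℚ)^(invB w)) •
      ((X 1 : MvPolynomial (Fin 2) ℚ) ^ desB w * X 0 ^ (0 - desB w)) = 1)]
  rw [Finset.sum_const, Finset.card_univ, card_signedPerm_zero, one_smul]

lemma Btilde_pow (n : ℕ) : Btilde n = ((X 0 : MvPolynomial (Fin 2) ℚ) - X 1)^n := by
  induction n with
  | zero => rw [Btilde_zero, pow_zero]
  | succ n ih => rw [Btilde_succ, ih, pow_succ, mul_comm]

lemma PM_add (n : ℕ) : BbivP n + BbivM n = Bbiv n := by
  rw [BbivP, BbivM, Bbiv]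
  exact Finset.sum_filter_add_sum_filter_not univ _ _

lemma PM_sub (n : ℕ) : BbivP n - BbivM n = Btilde n := by
  rw [BbivP, BbivM, Btilde]
  rw [← Finset.sum_filter_add_sum_filter_not (Finset.univ : Finset (SignedPerm n))
    (fun w => Even (invB w)) (fun w => ((-1:ℚ)^(invB w)) •
      ((X 1 : MvPolynomial (Fin 2) ℚ) ^ desB w * X 0 ^ (n - desB w)))]
  have h1 : ∑ w ∈ Finset.univ.filter (fun w : SignedPerm n => Even (invB w)),
      ((-1:ℚ)^(invB w)) • ((X 1 : MvPolynomial (Fin 2) ℚ) ^ desB w * X 0 ^ (n - desB w))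
      = ∑ w ∈ Finset.univ.filter (fun w : SignedPerm n => Even (invB w)),
        ((X 1 : MvPolynomial (Fin 2) ℚ) ^ desB w * X 0 ^ (n - desB w)) := by
    refine Finset.sum_congr rfl (fun w hw => ?_)
    have he : Even (invB w) := (Finset.mem_filter.mp hw).2
    rw [he.neg_one_pow, one_smul]
  have h2 : ∑ w ∈ Finset.univ.filter (fun w : SignedPerm n => ¬ Even (invB w)),
      ((-1:ℚ)^(invB w)) • ((X 1 : MvPolynomial (Fin 2) ℚ) ^ desB w * X 0 ^ (n - desB w))
      = - ∑ w ∈ Finset.univ.filter (fun w : SignedPerm n => ¬ Even (invB w)),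
        ((X 1 : MvPolynomial (Fin 2) ℚ) ^ desB w * X 0 ^ (n - desB w)) := by
    rw [← Finset.sum_neg_distrib]
    refine Finset.sum_congr rfl (fun w hw => ?_)
    have ho : Odd (invB w) := Nat.not_even_iff_odd.mp (Finset.mem_filter.mp hw).2
    rw [ho.neg_one_pow, neg_smul, one_smul]
  rw [h1, h2, sub_eq_add_neg]

end TB7
namespace TB8
open Finset TB TB2 TB3 TB4 TB5 TB6 TB7 MvPolynomial

def gam : ℕ → ℕ → ℕ
  | 0, i => if i = 0 then 1 else 0
  | (n+1), i => (2*i+1) * gam n i + (if i = 0 then 0 else 4*(n - 2*(i-1)) * gam n (i-1))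

lemma gam_zero (n : ℕ) : gam n 0 = 1 := by
  induction n with
  | zero => rfl
  | succ n ih => simp [gam, ih]

lemma gam_supp (n : ℕ) : ∀ i, n < 2*i → gam n i = 0 := by
  induction n with
  | zero =>
    intro i h
    have hne : ¬ i = 0 := by omega
    simp [gam, hne]
  | succ n ih =>
    intro i h
    have h1 : gam n i = 0 := ih i (by omega)
    rcases Nat.eq_zero_or_pos i with rfl | hi
    · omega
    · simp only [gam, h1, Nat.mul_zero, Nat.zero_add, if_neg (by omega : ¬ i = 0)]
      rcases Nat.lt_or_ge n (2*(i-1)) with h2 | h2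
      · rw [ih (i-1) h2]
        simp
      · have h3 : n - 2*(i-1) = 0 := by omega
        rw [h3]
        simp

lemma gam_even (n : ℕ) (i : ℕ) (hi : 1 ≤ i) : Even (gam n i) := by
  induction n generalizing i with
  | zero =>
    have hne : ¬ i = 0 := by omega
    simp [gam, hne]
  | succ n ih =>
    simp only [gam, if_neg (by omega : ¬ i = 0)]
    exact ((ih i hi).mul_left _).add
      (((show Even 4 from ⟨2, rfl⟩).mul_right _).mul_right _)

lemma gam_ge (n : ℕ) : ∀ i, 4^i * Nat.choose (n/2) i ≤ gam n i := by
  induction n with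
  | zero =>
    intro i
    rcases Nat.eq_zero_or_pos i with rfl | hi
    · simp [gam]
    · rw [Nat.choose_eq_zero_of_lt (by omega : (0:ℕ)/2 < i)]
      simp
  | succ n ih =>
    intro i
    rcases Nat.eq_zero_or_pos i with rfl | hi
    · simp [gam_zero]
    · have step1 : 4^i * Nat.choose (n/2) i ≤ (2*i+1) * gam n i := by
        have := ih i
        nlinarith [Nat.zero_le (gam n i)]
      rcases Nat.even_or_odd n with he | ho
      · have hdiv : (n+1)/2 = n/2 := by obtain ⟨m, rfl⟩ := he; omega
        rw [hdiv]
        calc 4^i * Nat.choose (n/2) i ≤ (2*i+1) * gam n i := step1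
          _ ≤ gam (n+1) i := by
              simp only [gam, if_neg (by omega : ¬ i = 0)]
              omega
      · have hdiv : (n+1)/2 = n/2 + 1 := by obtain ⟨m, rfl⟩ := ho; omega
        rw [hdiv]
        obtain ⟨j, rfl⟩ : ∃ j, i = j + 1 := ⟨i - 1, by omega⟩
        rw [Nat.choose_succ_succ (n/2) j]
        have key2 : 4^(j+1) * Nat.choose (n/2) j ≤ 4*(n - 2*j) * gam n j := by
          rcases Nat.eq_zero_or_pos (Nat.choose (n/2) j) with hc | hc
          · simp [hc]
          · have hj : j ≤ n/2 := by
              by_contra hcon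
              rw [Nat.choose_eq_zero_of_lt (by omega)] at hc
              omega
            have hn2 : 1 ≤ n - 2*j := by
              obtain ⟨m, rfl⟩ := ho
              omega
            calc 4^(j+1) * Nat.choose (n/2) j = 4 * (4^j * Nat.choose (n/2) j) := by ring
              _ ≤ 4 * gam n j := by
                  have := ih j
                  omega
              _ ≤ 4*(n - 2*j) * gam n j := by nlinarith [Nat.zero_le (gam n j)]
        calc 4^(j+1) * (Nat.choose (n/2) j + Nat.choose (n/2) (j+1))
            = 4^(j+1) * Nat.choose (n/2) j + 4^(j+1) * Nat.choose (n/2) (j+1) := by ring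
          _ ≤ 4*(n - 2*j) * gam n j + (2*(j+1)+1) * gam n (j+1) := by
              have := step1
              omega
          _ = gam (n+1) (j+1) := by
              simp only [gam, if_neg (by omega : ¬ j + 1 = 0), Nat.add_sub_cancel]
              omega

lemma Dop_sum {α : Type*} (s : Finset α) (f : α → MvPolynomial (Fin 2) ℚ) :
    Dop (∑ a ∈ s, f a) = ∑ a ∈ s, Dop (f a) := by
  unfold Dop
  rw [map_sum, map_sum, ← Finset.sum_add_distrib]

lemma Dop_C_mul (a : ℚ) (x : MvPolynomial (Fin 2) ℚ) : Dop (C a * x) = C a * Dop x := by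
  unfold Dop
  rw [Derivation.leibniz, Derivation.leibniz, pderiv_C, pderiv_C]
  simp only [smul_eq_mul, smul_zero, add_zero, zero_mul, mul_zero]
  ring

lemma Dop_uv (i k : ℕ) :
    Dop (((X 0 : MvPolynomial (Fin 2) ℚ) * X 1)^i * (X 0 + X 1)^k)
      = i • (((X 0 : MvPolynomial (Fin 2) ℚ) * X 1)^(i-1) * (X 0 + X 1)^(k+1))
        + (2*k) • (((X 0 : MvPolynomial (Fin 2) ℚ) * X 1)^i * (X 0 + X 1)^(k-1)) := by
  unfold Dop
  rw [Derivation.leibniz, Derivation.leibniz, Derivation.leibniz_pow, Derivation.leibniz_pow,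
    Derivation.leibniz_pow, Derivation.leibniz_pow, Derivation.leibniz, Derivation.leibniz,
    map_add, map_add]
  rw [pderiv_X_self, pderiv_X_of_ne (by decide), pderiv_X_of_ne (by decide), pderiv_X_self]
  simp only [smul_eq_mul, mul_one, mul_zero, zero_mul, add_zero, zero_add, one_mul]
  rcases Nat.eq_zero_or_pos i with rfl | hi <;> rcases Nat.eq_zero_or_pos k with rfl | hk
  · simp
  · obtain ⟨k', rfl⟩ : ∃ k', k = k' + 1 := ⟨k - 1, by omega⟩
    simp only [Nat.add_sub_cancel, Nat.zero_sub, zero_smul, zero_add, pow_zero, one_mul,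
      nsmul_eq_mul]
    push_cast
    ring
  · obtain ⟨i', rfl⟩ : ∃ i', i = i' + 1 := ⟨i - 1, by omega⟩
    simp only [Nat.add_sub_cancel, Nat.mul_zero, Nat.zero_sub, zero_smul, add_zero, pow_zero,
      mul_one, nsmul_eq_mul]
    push_cast
    ring
  · obtain ⟨k', rfl⟩ : ∃ k', k = k' + 1 := ⟨k - 1, by omega⟩
    obtain ⟨i', rfl⟩ : ∃ i', i = i' + 1 := ⟨i - 1, by omega⟩
    simp only [Nat.add_sub_cancel, nsmul_eq_mul]
    push_cast
    ring

lemma gam_eq : ∀ n, Bbiv n = ∑ i ∈ range (n+1),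
    (gam n i : MvPolynomial (Fin 2) ℚ) * ((X 0 * X 1)^i * (X 0 + X 1)^(n - 2*i)) := by
  intro n
  induction n with
  | zero =>
    rw [Bbiv_zero]
    simp [gam_zero]
  | succ n ih =>
    rw [Bbiv_succ, ih, Finset.mul_sum, Dop_sum, Finset.mul_sum, ← Finset.sum_add_distrib]
    have step : ∀ i ∈ range (n+1),
        (X 0 + X 1) * ((gam n i : MvPolynomial (Fin 2) ℚ) * ((X 0 * X 1)^i * (X 0 + X 1)^(n - 2*i)))
          + 2 * (X 0 * X 1) * Dop ((gam n i : MvPolynomial (Fin 2) ℚ) * ((X 0 * X 1)^i * (X 0 + X 1)^(n - 2*i)))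
        = (((2*i+1) * gam n i : ℕ) : MvPolynomial (Fin 2) ℚ) * ((X 0 * X 1)^i * (X 0 + X 1)^((n+1) - 2*i))
          + ((4*(n - 2*i) * gam n i : ℕ) : MvPolynomial (Fin 2) ℚ)
              * ((X 0 * X 1)^(i+1) * (X 0 + X 1)^((n+1) - 2*(i+1))) := by
      intro i _
      rcases Nat.lt_or_ge n (2*i) with hbig | hle
      · rw [gam_supp n i hbig]
        have hz : Dop (0 : MvPolynomial (Fin 2) ℚ) = 0 := by unfold Dop; simp
        simp [hz]
      · rw [show ((gam n i : ℕ) : MvPolynomial (Fin 2) ℚ) = C ((gam n i : ℕ) : ℚ) from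
          (map_natCast (C : ℚ →+* MvPolynomial (Fin 2) ℚ) (gam n i)).symm]
        rw [Dop_C_mul, Dop_uv]
        rw [show (n+1) - 2*i = (n - 2*i) + 1 from by omega,
          show (n+1) - 2*(i+1) = (n - 2*i) - 1 from by omega]
        set k := n - 2*i with hk
        rcases Nat.eq_zero_or_pos i with rfl | hi <;> rcases Nat.eq_zero_or_pos k with hk0 | hk1
        · rw [hk0]
          simp only [Nat.zero_sub, zero_smul, zero_add, pow_zero, one_mul, mul_one,
            Nat.mul_zero, nsmul_eq_mul, map_natCast]
          push_cast
          ring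
        · obtain ⟨k', hk'⟩ : ∃ k', k = k' + 1 := ⟨k - 1, by omega⟩
          rw [hk']
          simp only [Nat.add_sub_cancel, nsmul_eq_mul, map_natCast]
          push_cast
          ring
        · rw [hk0]
          obtain ⟨i', rfl⟩ : ∃ i', i = i' + 1 := ⟨i - 1, by omega⟩
          simp only [Nat.add_sub_cancel, nsmul_eq_mul, map_natCast]
          push_cast
          ring
        · obtain ⟨k', hk'⟩ : ∃ k', k = k' + 1 := ⟨k - 1, by omega⟩
          obtain ⟨i', rfl⟩ : ∃ i', i = i' + 1 := ⟨i - 1, by omega⟩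
          rw [hk']
          simp only [Nat.add_sub_cancel, nsmul_eq_mul, map_natCast]
          push_cast
          ring
    rw [Finset.sum_congr rfl step, Finset.sum_add_distrib]
    have hA : ∑ i ∈ range (n+1),
        (((2*i+1) * gam n i : ℕ) : MvPolynomial (Fin 2) ℚ) * ((X 0 * X 1)^i * (X 0 + X 1)^((n+1) - 2*i))
        = ∑ i ∈ range (n+2),
          (((2*i+1) * gam n i : ℕ) : MvPolynomial (Fin 2) ℚ) * ((X 0 * X 1)^i * (X 0 + X 1)^((n+1) - 2*i)) := by
      rw [Finset.sum_range_succ (n := n+1)]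
      rw [gam_supp n (n+1) (by omega)]
      simp
    have hB : ∑ i ∈ range (n+1),
        ((4*(n - 2*i) * gam n i : ℕ) : MvPolynomial (Fin 2) ℚ) * ((X 0 * X 1)^(i+1) * (X 0 + X 1)^((n+1) - 2*(i+1)))
        = ∑ i ∈ range (n+2), (if i = 0 then 0 else ((4*(n - 2*(i-1)) * gam n (i-1) : ℕ) : MvPolynomial (Fin 2) ℚ))
            * ((X 0 * X 1)^i * (X 0 + X 1)^((n+1) - 2*i)) := by
      rw [Finset.sum_range_succ' (fun i => (if i = 0 then 0 else ((4*(n - 2*(i-1)) * gam n (i-1) : ℕ) : MvPolynomial (Fin 2) ℚ))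
            * ((X 0 * X 1)^i * (X 0 + X 1)^((n+1) - 2*i))) (n+1)]
      simp
    rw [hA, hB, ← Finset.sum_add_distrib]
    refine Finset.sum_congr rfl (fun i _ => ?_)
    rw [← add_mul]
    congr 1
    rcases Nat.eq_zero_or_pos i with rfl | hi
    · simp only [if_pos rfl, add_zero, gam]
      norm_num
    · rw [if_neg (by omega)]
      rw [show gam (n+1) i = (2*i+1) * gam n i + 4*(n - 2*(i-1)) * gam n (i-1) from by
        simp [gam, if_neg (by omega : ¬ i = 0)]]
      push_cast
      ring

end TB8
namespace TB9
open Finset TB TB2 TB3 TB4 TB5 TB6 TB7 TB8 MvPolynomial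

def gamP (n i : ℕ) : ℕ :=
  if Even i then (gam n i + 4^i * Nat.choose (n/2) i)/2
  else (gam n i - 4^i * Nat.choose (n/2) i)/2

def gamM (n i : ℕ) : ℕ :=
  if Even i then (gam n i - 4^i * Nat.choose (n/2) i)/2
  else (gam n i + 4^i * Nat.choose (n/2) i)/2

lemma even_four_pow (i : ℕ) (hi : 1 ≤ i) : Even ((4:ℕ)^i) := by
  obtain ⟨j, rfl⟩ : ∃ j, i = j + 1 := ⟨i - 1, by omega⟩
  rw [pow_succ]
  exact (show Even 4 from ⟨2, rfl⟩).mul_left _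

lemma parity_add (n i : ℕ) : Even (gam n i + 4^i * Nat.choose (n/2) i) := by
  rcases Nat.eq_zero_or_pos i with rfl | hi
  · simp [gam_zero]
  · exact (gam_even n i hi).add ((even_four_pow i hi).mul_right _)

lemma parity_sub (n i : ℕ) : Even (gam n i - 4^i * Nat.choose (n/2) i) := by
  rcases Nat.eq_zero_or_pos i with rfl | hi
  · simp [gam_zero]
  · rw [Nat.even_sub (gam_ge n i)]
    constructor
    · intro _; exact (even_four_pow i hi).mul_right _
    · intro _; exact gam_even n i hi

lemma twice_P (n i : ℕ) :
    (2:ℚ) * (gamP n i : ℚ) = (gam n i : ℚ) + (-4:ℚ)^i * (Nat.choose (n/2) i : ℚ) := by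
  rcases Nat.even_or_odd i with he | ho
  · rw [gamP, if_pos he]
    have h1 : 2 * ((gam n i + 4^i * Nat.choose (n/2) i)/2) = gam n i + 4^i * Nat.choose (n/2) i :=
      Nat.mul_div_cancel' (parity_add n i).two_dvd
    have h3 : ((2 * ((gam n i + 4^i * Nat.choose (n/2) i)/2) : ℕ) : ℚ)
        = (gam n i : ℚ) + (4:ℚ)^i * (Nat.choose (n/2) i : ℚ) := by
      rw [h1]; push_cast; ring
    push_cast at h3
    rw [he.neg_pow]
    push_cast
    linarith
  · rw [gamP, if_neg (Nat.not_even_iff_odd.mpr ho)]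
    have h1 : 2 * ((gam n i - 4^i * Nat.choose (n/2) i)/2) = gam n i - 4^i * Nat.choose (n/2) i :=
      Nat.mul_div_cancel' (parity_sub n i).two_dvd
    have h3 : ((2 * ((gam n i - 4^i * Nat.choose (n/2) i)/2) : ℕ) : ℚ)
        = (gam n i : ℚ) - (4:ℚ)^i * (Nat.choose (n/2) i : ℚ) := by
      rw [h1, Nat.cast_sub (gam_ge n i)]; push_cast; ring
    push_cast at h3
    rw [ho.neg_pow]
    push_cast
    linarith

lemma twice_M (n i : ℕ) :
    (2:ℚ) * (gamM n i : ℚ) = (gam n i : ℚ) - (-4:ℚ)^i * (Nat.choose (n/2) i : ℚ) := by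
  rcases Nat.even_or_odd i with he | ho
  · rw [gamM, if_pos he]
    have h1 : 2 * ((gam n i - 4^i * Nat.choose (n/2) i)/2) = gam n i - 4^i * Nat.choose (n/2) i :=
      Nat.mul_div_cancel' (parity_sub n i).two_dvd
    have h3 : ((2 * ((gam n i - 4^i * Nat.choose (n/2) i)/2) : ℕ) : ℚ)
        = (gam n i : ℚ) - (4:ℚ)^i * (Nat.choose (n/2) i : ℚ) := by
      rw [h1, Nat.cast_sub (gam_ge n i)]; push_cast; ring
    push_cast at h3
    rw [he.neg_pow]
    push_cast
    linarith
  · rw [gamM, if_neg (Nat.not_even_iff_odd.mpr ho)]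
    have h1 : 2 * ((gam n i + 4^i * Nat.choose (n/2) i)/2) = gam n i + 4^i * Nat.choose (n/2) i :=
      Nat.mul_div_cancel' (parity_add n i).two_dvd
    have h3 : ((2 * ((gam n i + 4^i * Nat.choose (n/2) i)/2) : ℕ) : ℚ)
        = (gam n i : ℚ) + (4:ℚ)^i * (Nat.choose (n/2) i : ℚ) := by
      rw [h1]; push_cast; ring
    push_cast at h3
    rw [ho.neg_pow]
    push_cast
    linarith

lemma btilde_sum (n m : ℕ) (hm : n = m + m) :
    Btilde n = ∑ i ∈ range (n+1),
      C ((-4:ℚ)^i * (Nat.choose m i : ℚ)) * ((X 0 * X 1)^i * (X 0 + X 1)^(n - 2*i)) := by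
  rw [Btilde_pow]
  have hC4 : (C (-4:ℚ) : MvPolynomial (Fin 2) ℚ) = -4 := by
    rw [map_neg, map_ofNat]
  have h2 : ((X 0 : MvPolynomial (Fin 2) ℚ) - X 1)^n
      = ((C (-4:ℚ) * (X 0 * X 1)) + ((X 0 + X 1)^2))^m := by
    rw [show n = 2*m from by omega, pow_mul]
    congr 1
    rw [hC4]
    ring
  rw [h2, add_pow]
  have h3 : ∀ k ∈ range (m+1),
      (C (-4:ℚ) * (X 0 * X 1))^k * ((X 0 + X 1)^2)^(m - k) * (Nat.choose m k : MvPolynomial (Fin 2) ℚ)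
      = C ((-4:ℚ)^k * (Nat.choose m k : ℚ)) * ((X 0 * X 1)^k * (X 0 + X 1)^(n - 2*k)) := by
    intro k hk
    have hkm := Finset.mem_range.mp hk
    rw [← pow_mul, show 2*(m-k) = n - 2*k from by omega]
    rw [mul_pow, ← map_pow, map_mul,
      show ((Nat.choose m k : ℕ) : MvPolynomial (Fin 2) ℚ) = C ((Nat.choose m k : ℕ) : ℚ) from
        (map_natCast (C : ℚ →+* MvPolynomial (Fin 2) ℚ) _).symm]
    ring
  rw [Finset.sum_congr rfl h3]
  refine Finset.sum_subset (by
    apply Finset.range_subset_range.mpr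
    omega) (fun x _ hx => ?_)
  have hxm : m < x := by
    simp only [Finset.mem_range, not_lt] at hx
    omega
  rw [Nat.choose_eq_zero_of_lt hxm]
  simp

lemma two_ne_zero' : (2 : MvPolynomial (Fin 2) ℚ) ≠ 0 := by
  intro h
  rw [← map_ofNat (C : ℚ →+* MvPolynomial (Fin 2) ℚ) 2, ← map_zero
    (C : ℚ →+* MvPolynomial (Fin 2) ℚ)] at h
  have := MvPolynomial.C_injective (Fin 2) ℚ h
  norm_num at this

lemma even_case (n : ℕ) (hn : Even n) : BivGamma (BbivP n) n ∧ BivGamma (BbivM n) n := by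
  obtain ⟨m, hm⟩ := hn
  have hm2 : n/2 = m := by omega
  have ha := PM_add n
  have hb := PM_sub n
  have hBb := gam_eq n
  have hBt := btilde_sum n m hm
  have hsupp : ∀ (f : ℕ → ℕ), (f = gamP n ∨ f = gamM n) → ∀ i, f i ≠ 0 → 2*i ≤ n := by
    intro f hf i h
    by_contra hc
    apply h
    have h1 : gam n i = 0 := gam_supp n i (by omega)
    have h2 : Nat.choose (n/2) i = 0 := Nat.choose_eq_zero_of_lt (by omega)
    rcases hf with rfl | rfl <;> simp [gamP, gamM, h1, h2]
  constructor
  · refine ⟨gamP n, hsupp (gamP n) (Or.inl rfl), ?_⟩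
    have key : BbivP n + BbivP n
        = (∑ i ∈ range (n+1), (gamP n i : MvPolynomial (Fin 2) ℚ) *
            ((X 0 * X 1)^i * (X 0 + X 1)^(n - 2*i)))
          + ∑ i ∈ range (n+1), (gamP n i : MvPolynomial (Fin 2) ℚ) *
            ((X 0 * X 1)^i * (X 0 + X 1)^(n - 2*i)) := by
      have : BbivP n + BbivP n = Bbiv n + Btilde n := by linear_combination ha + hb
      rw [this, hBb, hBt, ← Finset.sum_add_distrib, ← Finset.sum_add_distrib]
      refine Finset.sum_congr rfl (fun i _ => ?_)
      rw [← add_mul, ← add_mul]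
      congr 1
      rw [show ((gam n i : ℕ) : MvPolynomial (Fin 2) ℚ) = C ((gam n i : ℕ) : ℚ) from
          (map_natCast (C : ℚ →+* MvPolynomial (Fin 2) ℚ) _).symm,
        show ((gamP n i : ℕ) : MvPolynomial (Fin 2) ℚ) = C ((gamP n i : ℕ) : ℚ) from
          (map_natCast (C : ℚ →+* MvPolynomial (Fin 2) ℚ) _).symm,
        ← map_add, ← map_add]
      congr 1
      have := twice_P n i
      rw [hm2] at this
      linarith
    have key2 : (2 : MvPolynomial (Fin 2) ℚ) * BbivP n
        = 2 * ∑ i ∈ range (n+1), (gamP n i : MvPolynomial (Fin 2) ℚ) *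
            ((X 0 * X 1)^i * (X 0 + X 1)^(n - 2*i)) := by
      rw [two_mul, two_mul]
      exact key
    exact mul_left_cancel₀ two_ne_zero' key2
  · refine ⟨gamM n, hsupp (gamM n) (Or.inr rfl), ?_⟩
    have key : BbivM n + BbivM n
        = (∑ i ∈ range (n+1), (gamM n i : MvPolynomial (Fin 2) ℚ) *
            ((X 0 * X 1)^i * (X 0 + X 1)^(n - 2*i)))
          + ∑ i ∈ range (n+1), (gamM n i : MvPolynomial (Fin 2) ℚ) *
            ((X 0 * X 1)^i * (X 0 + X 1)^(n - 2*i)) := by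
      have : BbivM n + BbivM n = Bbiv n - Btilde n := by linear_combination ha - hb
      rw [this, hBb, hBt, ← Finset.sum_sub_distrib, ← Finset.sum_add_distrib]
      refine Finset.sum_congr rfl (fun i _ => ?_)
      rw [← sub_mul, ← add_mul]
      congr 1
      rw [show ((gam n i : ℕ) : MvPolynomial (Fin 2) ℚ) = C ((gam n i : ℕ) : ℚ) from
          (map_natCast (C : ℚ →+* MvPolynomial (Fin 2) ℚ) _).symm,
        show ((gamM n i : ℕ) : MvPolynomial (Fin 2) ℚ) = C ((gamM n i : ℕ) : ℚ) from
          (map_natCast (C : ℚ →+* MvPolynomial (Fin 2) ℚ) _).symm,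
        ← map_sub, ← map_add]
      congr 1
      have := twice_M n i
      rw [hm2] at this
      linarith
    have key2 : (2 : MvPolynomial (Fin 2) ℚ) * BbivM n
        = 2 * ∑ i ∈ range (n+1), (gamM n i : MvPolynomial (Fin 2) ℚ) *
            ((X 0 * X 1)^i * (X 0 + X 1)^(n - 2*i)) := by
      rw [two_mul, two_mul]
      exact key
    exact mul_left_cancel₀ two_ne_zero' key2

lemma even_case' (n : ℕ) (hn : Even n) : BivGamma (BbivP n) n ∧ BivGamma (BbivM n) n := by
  have h := even_case n hn
  constructor
  · obtain ⟨γ, h1, h2⟩ := h.1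
    exact ⟨γ, h1, h2⟩
  · exact h.2

end TB9
namespace TB10
open Finset TB TB2 TB3 TB4 TB5 TB6 TB7 MvPolynomial

def idp (n : ℕ) : SignedPerm n := (1, fun _ => false)
def wneg (n : ℕ) : SignedPerm n := (1, fun _ => true)

lemma perm_eq_one {n : ℕ} (π : Equiv.Perm (Fin n)) (h : ∀ k : Fin n, k.1 ≤ (π k).1) :
    π = 1 := by
  have hsum : ∑ k : Fin n, ((π k).1) = ∑ k : Fin n, k.1 := Equiv.sum_comp π (fun k => k.1)
  have hpt : ∀ k ∈ (univ : Finset (Fin n)), k.1 = (π k).1 := by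
    rw [← Finset.sum_eq_sum_iff_of_le (fun k _ => h k)]
    omega
  apply Equiv.ext
  intro k
  exact (Fin.ext (hpt k (mem_univ k))).symm

lemma bw_idp {n : ℕ} (j : ℕ) (h1 : 1 ≤ j) (h2 : j ≤ n) : bw (idp n) j = (j:ℤ) := by
  have e : j = ((⟨j-1, by omega⟩ : Fin n)).1 + 1 := by simp; omega
  rw [e, bw_val]
  simp only [idp, Equiv.Perm.one_apply, Bool.false_eq_true, if_false]
  simp
  try omega

lemma bw_wneg {n : ℕ} (j : ℕ) (h1 : 1 ≤ j) (h2 : j ≤ n) : bw (wneg n) j = -(j:ℤ) := by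
  have e : j = ((⟨j-1, by omega⟩ : Fin n)).1 + 1 := by simp; omega
  rw [e, bw_val]
  simp only [wneg, Equiv.Perm.one_apply, if_true]
  simp
  try omega

lemma bw_ne_zero {n : ℕ} (w : SignedPerm n) (j : ℕ) (h1 : 1 ≤ j) (h2 : j ≤ n) :
    bw w j ≠ 0 := by
  have e : j = ((⟨j-1, by omega⟩ : Fin n)).1 + 1 := by simp; omega
  rw [e, bw_val]
  split_ifs <;> omega

lemma bw_ne {n : ℕ} (w : SignedPerm n) (j : ℕ) (h1 : 1 ≤ j) (hj : j + 1 ≤ n) :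
    bw w (j+1) ≠ bw w j := by
  intro hc
  have ha : j < n := by omega
  have hb : j - 1 < n := by omega
  have e1 : j + 1 = ((⟨j, ha⟩ : Fin n)).1 + 1 := by simp
  have e2 : j = ((⟨j-1, hb⟩ : Fin n)).1 + 1 := by simp; omega
  rw [e1, bw_val] at hc
  conv_rhs at hc => rw [e2, bw_val]
  have key : (w.1 ⟨j, ha⟩ : ℕ) = (w.1 ⟨j-1, hb⟩ : ℕ) := by
    split_ifs at hc <;> omega
  have h3 := w.1.injective (Fin.ext key)
  rw [Fin.mk.injEq] at h3
  omega

lemma desB_zero_unique {n : ℕ} (w : SignedPerm n) (h : desB w = 0) : w = idp n := by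
  have hfilter : ∀ i, i < n → ¬ (bw w (i+1) < bw w i) := by
    intro i hi hlt
    have hne : ((range n).filter (fun i => bw w (i+1) < bw w i)).Nonempty :=
      ⟨i, mem_filter.mpr ⟨mem_range.mpr hi, hlt⟩⟩
    have hpos := Finset.card_pos.mpr hne
    unfold desB at h
    omega
  have chain : ∀ j, 1 ≤ j → j ≤ n → (j:ℤ) ≤ bw w j := by
    intro j
    induction j with
    | zero => omega
    | succ j ih =>
      intro _ hj
      rcases Nat.eq_zero_or_pos j with rfl | hjpos
      · have h0 := hfilter 0 (by omega)
        rw [bw_zero] at h0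
        have hne := bw_ne_zero w 1 (by omega) (by omega)
        simp only [Nat.zero_add] at *
        omega
      · have hstep := hfilter j (by omega)
        have hne := bw_ne w j hjpos (by omega)
        have hih := ih (by omega) (by omega)
        omega
  have hsign : ∀ k : Fin n, w.2 k = false := by
    intro k
    have hc := chain (k.1+1) (by omega) (by have := k.2; omega)
    rw [bw_val] at hc
    cases hw : w.2 k
    · rfl
    · rw [if_pos hw] at hc
      omega
  have hperm : w.1 = 1 := by
    apply perm_eq_one
    intro k
    have hc := chain (k.1+1) (by omega) (by have := k.2; omega)
    rw [bw_val, if_neg (by rw [hsign k]; simp)] at hc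
    omega
  obtain ⟨π, s⟩ := w
  simp only [idp]
  exact Prod.ext hperm (funext (fun k => hsign k))

lemma desB_n_unique {n : ℕ} (w : SignedPerm n) (h : desB w = n) : w = wneg n := by
  have hfull : (range n).filter (fun i => bw w (i+1) < bw w i) = range n := by
    apply Finset.eq_of_subset_of_card_le (Finset.filter_subset _ _)
    unfold desB at h
    rw [Finset.card_range]
    omega
  have hfilter : ∀ i, i < n → bw w (i+1) < bw w i := by
    intro i hi
    have hmem : i ∈ (range n).filter (fun i => bw w (i+1) < bw w i) := by
      rw [hfull]
      exact mem_range.mpr hi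
    exact (mem_filter.mp hmem).2
  have chain : ∀ j, 1 ≤ j → j ≤ n → bw w j ≤ -(j:ℤ) := by
    intro j
    induction j with
    | zero => omega
    | succ j ih =>
      intro _ hj
      rcases Nat.eq_zero_or_pos j with rfl | hjpos
      · have h0 := hfilter 0 (by omega)
        rw [bw_zero] at h0
        simp only [Nat.zero_add] at *
        omega
      · have hstep := hfilter j (by omega)
        have hih := ih (by omega) (by omega)
        omega
  have hsign : ∀ k : Fin n, w.2 k = true := by
    intro k
    have hc := chain (k.1+1) (by omega) (by have := k.2; omega)
    rw [bw_val] at hc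
    cases hw : w.2 k
    · rw [if_neg (by rw [hw]; simp)] at hc
      omega
    · rfl
  have hperm : w.1 = 1 := by
    apply perm_eq_one
    intro k
    have hc := chain (k.1+1) (by omega) (by have := k.2; omega)
    rw [bw_val, if_pos (hsign k)] at hc
    omega
  obtain ⟨π, s⟩ := w
  simp only [wneg]
  exact Prod.ext hperm (funext (fun k => hsign k))

lemma invB_idp (n : ℕ) : invB (idp n) = 0 := by
  rw [invB_eq_sum]
  have p1 : ∀ i ∈ range n, (∑ j ∈ range n,
      if (i < j ∧ bw (idp n) (j+1) < bw (idp n) (i+1)) then (1:ℕ) else 0) = 0 := by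
    intro i hi
    refine Finset.sum_eq_zero (fun j hj => ?_)
    rw [bw_idp (j+1) (by omega) (by have := mem_range.mp hj; omega),
      bw_idp (i+1) (by omega) (by have := mem_range.mp hi; omega)]
    rw [if_neg (by rintro ⟨h1, h2⟩; omega)]
  have p2 : ∀ i ∈ range n, (∑ j ∈ range n,
      if (i < j ∧ bw (idp n) (j+1) < -(bw (idp n) (i+1))) then (1:ℕ) else 0) = 0 := by
    intro i hi
    refine Finset.sum_eq_zero (fun j hj => ?_)
    rw [bw_idp (j+1) (by omega) (by have := mem_range.mp hj; omega),
      bw_idp (i+1) (by omega) (by have := mem_range.mp hi; omega)]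
    rw [if_neg (by rintro ⟨h1, h2⟩; omega)]
  have p3 : ∀ i ∈ range n, (if bw (idp n) (i+1) < 0 then (1:ℕ) else 0) = 0 := by
    intro i hi
    rw [bw_idp (i+1) (by omega) (by have := mem_range.mp hi; omega)]
    rw [if_neg (by omega)]
  rw [Finset.sum_congr rfl p1, Finset.sum_congr rfl p2, Finset.sum_congr rfl p3]
  simp

lemma invB_wneg (n : ℕ) (hn : Odd n) : ¬ Even (invB (wneg n)) := by
  rw [invB_eq_sum]
  have p1 : ∀ i ∈ range n, (∑ j ∈ range n,
      if (i < j ∧ bw (wneg n) (j+1) < bw (wneg n) (i+1)) then (1:ℕ) else 0)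
      = ∑ j ∈ range n, if i < j then (1:ℕ) else 0 := by
    intro i hi
    refine Finset.sum_congr rfl (fun j hj => ?_)
    rw [bw_wneg (j+1) (by omega) (by have := mem_range.mp hj; omega),
      bw_wneg (i+1) (by omega) (by have := mem_range.mp hi; omega)]
    refine if_congr ?_ rfl rfl
    constructor
    · rintro ⟨h1, -⟩; exact h1
    · intro h1; exact ⟨h1, by omega⟩
  have p2 : ∀ i ∈ range n, (∑ j ∈ range n,
      if (i < j ∧ bw (wneg n) (j+1) < -(bw (wneg n) (i+1))) then (1:ℕ) else 0)
      = ∑ j ∈ range n, if i < j then (1:ℕ) else 0 := by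
    intro i hi
    refine Finset.sum_congr rfl (fun j hj => ?_)
    rw [bw_wneg (j+1) (by omega) (by have := mem_range.mp hj; omega),
      bw_wneg (i+1) (by omega) (by have := mem_range.mp hi; omega)]
    refine if_congr ?_ rfl rfl
    constructor
    · rintro ⟨h1, -⟩; exact h1
    · intro h1; exact ⟨h1, by omega⟩
  have p3 : ∀ i ∈ range n, (if bw (wneg n) (i+1) < 0 then (1:ℕ) else 0) = 1 := by
    intro i hi
    rw [bw_wneg (i+1) (by omega) (by have := mem_range.mp hi; omega)]
    rw [if_pos (by omega)]
  rw [Finset.sum_congr rfl p1, Finset.sum_congr rfl p2, Finset.sum_congr rfl p3]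
  rw [Finset.sum_const, Finset.card_range, smul_eq_mul, mul_one]
  obtain ⟨m, hm⟩ := hn
  rw [Nat.even_iff]
  omega

lemma desB_idp (n : ℕ) : desB (idp n) = 0 := by
  rw [desB_eq_sum]
  refine Finset.sum_eq_zero (fun i hi => ?_)
  have hin := mem_range.mp hi
  rcases Nat.eq_zero_or_pos i with rfl | hipos
  · rw [bw_zero, bw_idp 1 (by omega) (by omega)]
    rw [if_neg (by omega)]
  · rw [bw_idp (i+1) (by omega) (by omega), bw_idp i (by omega) (by omega)]
    rw [if_neg (by omega)]

lemma desB_wneg (n : ℕ) : desB (wneg n) = n := by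
  rw [desB_eq_sum]
  have hterm : ∀ i ∈ range n, (if bw (wneg n) (i+1) < bw (wneg n) i then (1:ℕ) else 0) = 1 := by
    intro i hi
    have hin := mem_range.mp hi
    rcases Nat.eq_zero_or_pos i with rfl | hipos
    · rw [bw_zero, bw_wneg 1 (by omega) (by omega)]
      rw [if_pos (by omega)]
    · rw [bw_wneg (i+1) (by omega) (by omega), bw_wneg i (by omega) (by omega)]
      rw [if_pos (by omega)]
  rw [Finset.sum_congr rfl hterm, Finset.sum_const, Finset.card_range, smul_eq_mul, mul_one]

end TB10
namespace TB11
open Finset TB TB2 TB3 TB4 TB5 TB6 TB7 TB10 MvPolynomial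

def u1 (n : ℕ) : SignedPerm (n+3) := (1, fun i => decide (i.1 = 0))
def u2 (n : ℕ) : SignedPerm (n+3) := (Equiv.swap 0 1, fun _ => false)
def v1 (n : ℕ) : SignedPerm (n+3) := (1, fun i => decide (i.1 ≠ 0))
def v2 (n : ℕ) : SignedPerm (n+3) := (Equiv.swap 0 1, fun _ => true)

lemma bw_u1 {n : ℕ} (j : ℕ) (h1 : 1 ≤ j) (h2 : j ≤ n+3) :
    bw (u1 n) j = if j = 1 then (-1:ℤ) else (j:ℤ) := by
  have e : j = ((⟨j-1, by omega⟩ : Fin (n+3))).1 + 1 := by simp; omega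
  rw [e, bw_val]
  simp only [u1, Equiv.Perm.one_apply, decide_eq_true_eq, Fin.val_mk]
  split_ifs <;> omega

lemma bw_v1 {n : ℕ} (j : ℕ) (h1 : 1 ≤ j) (h2 : j ≤ n+3) :
    bw (v1 n) j = if j = 1 then (1:ℤ) else -(j:ℤ) := by
  have e : j = ((⟨j-1, by omega⟩ : Fin (n+3))).1 + 1 := by simp; omega
  rw [e, bw_val]
  simp only [v1, Equiv.Perm.one_apply, decide_eq_true_eq, Fin.val_mk, ne_eq]
  split_ifs <;> omega

lemma swap_val {n : ℕ} (k : Fin (n+3)) :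
    ((Equiv.swap (0 : Fin (n+3)) 1) k).1 = if k.1 = 0 then 1 else if k.1 = 1 then 0 else k.1 := by
  rcases eq_or_ne k 0 with rfl | h0
  · rw [Equiv.swap_apply_left]
    simp
  · rcases eq_or_ne k 1 with rfl | h1
    · rw [Equiv.swap_apply_right]
      simp [Fin.ext_iff] at h0 ⊢
      try omega
    · rw [Equiv.swap_apply_of_ne_of_ne h0 h1]
      rw [if_neg (by intro h; exact h0 (Fin.ext (by simp [h]))), if_neg (by intro h; exact h1 (Fin.ext (by simp [h])))]

lemma bw_u2 {n : ℕ} (j : ℕ) (h1 : 1 ≤ j) (h2 : j ≤ n+3) :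
    bw (u2 n) j = if j = 1 then (2:ℤ) else if j = 2 then (1:ℤ) else (j:ℤ) := by
  have e : j = ((⟨j-1, by omega⟩ : Fin (n+3))).1 + 1 := by simp; omega
  rw [e, bw_val]
  simp only [u2, Bool.false_eq_true, if_false, swap_val, Fin.val_mk]
  split_ifs <;> omega

lemma bw_v2 {n : ℕ} (j : ℕ) (h1 : 1 ≤ j) (h2 : j ≤ n+3) :
    bw (v2 n) j = if j = 1 then (-2:ℤ) else if j = 2 then (-1:ℤ) else -(j:ℤ) := by
  have e : j = ((⟨j-1, by omega⟩ : Fin (n+3))).1 + 1 := by simp; omega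
  rw [e, bw_val]
  simp only [v2, if_true, swap_val, Fin.val_mk]
  split_ifs <;> omega

end TB11
namespace TB12
open Finset TB TB2 TB3 TB4 TB5 TB6 TB7 TB10 TB11 MvPolynomial

lemma sum_ite_eq_one (N a : ℕ) (ha : a < N) :
    ∑ i ∈ range N, (if i = a then (1:ℕ) else 0) = 1 := by
  rw [Finset.sum_ite_eq' (range N) a (fun _ => 1)]
  rw [if_pos (mem_range.mpr ha)]

lemma sum_ite_ne (N a : ℕ) (ha : a < N) :
    ∑ i ∈ range N, (if i = a then (0:ℕ) else 1) = N - 1 := by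
  have key : (∑ i ∈ range N, (if i = a then (0:ℕ) else 1))
      + ∑ i ∈ range N, (if i = a then (1:ℕ) else 0) = N := by
    rw [← Finset.sum_add_distrib]
    have h1 : ∀ i ∈ range N, ((if i = a then (0:ℕ) else 1) + if i = a then (1:ℕ) else 0)
        = 1 := by
      intro i _
      split_ifs <;> omega
    rw [Finset.sum_congr rfl h1]
    rw [Finset.sum_const, Finset.card_range, smul_eq_mul, mul_one]
  have h2 := sum_ite_eq_one N a ha
  omega

lemma desB_u1 (n : ℕ) : desB (u1 n) = 1 := by
  rw [desB_eq_sum]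
  have hterm : ∀ i ∈ range (n+3),
      (if bw (u1 n) (i+1) < bw (u1 n) i then (1:ℕ) else 0) = if i = 0 then 1 else 0 := by
    intro i hi
    have hin := mem_range.mp hi
    rcases Nat.eq_zero_or_pos i with rfl | hpos
    · rw [bw_zero, bw_u1 1 (by omega) (by omega)]
      norm_num
    · rw [bw_u1 (i+1) (by omega) (by omega), bw_u1 i (by omega) (by omega)]
      split_ifs <;> omega
  rw [Finset.sum_congr rfl hterm, sum_ite_eq_one (n+3) 0 (by omega)]

lemma desB_u2 (n : ℕ) : desB (u2 n) = 1 := by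
  rw [desB_eq_sum]
  have hterm : ∀ i ∈ range (n+3),
      (if bw (u2 n) (i+1) < bw (u2 n) i then (1:ℕ) else 0) = if i = 1 then 1 else 0 := by
    intro i hi
    have hin := mem_range.mp hi
    rcases Nat.eq_zero_or_pos i with rfl | hpos
    · rw [bw_zero, bw_u2 1 (by omega) (by omega)]
      norm_num
    · rw [bw_u2 (i+1) (by omega) (by omega), bw_u2 i (by omega) (by omega)]
      split_ifs <;> omega
  rw [Finset.sum_congr rfl hterm, sum_ite_eq_one (n+3) 1 (by omega)]

lemma desB_v1 (n : ℕ) : desB (v1 n) = n+2 := by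
  rw [desB_eq_sum]
  have hterm : ∀ i ∈ range (n+3),
      (if bw (v1 n) (i+1) < bw (v1 n) i then (1:ℕ) else 0) = if i = 0 then 0 else 1 := by
    intro i hi
    have hin := mem_range.mp hi
    rcases Nat.eq_zero_or_pos i with rfl | hpos
    · rw [bw_zero, bw_v1 1 (by omega) (by omega)]
      norm_num
    · rw [bw_v1 (i+1) (by omega) (by omega), bw_v1 i (by omega) (by omega)]
      split_ifs <;> omega
  rw [Finset.sum_congr rfl hterm, sum_ite_ne (n+3) 0 (by omega)]
  omega

lemma desB_v2 (n : ℕ) : desB (v2 n) = n+2 := by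
  rw [desB_eq_sum]
  have hterm : ∀ i ∈ range (n+3),
      (if bw (v2 n) (i+1) < bw (v2 n) i then (1:ℕ) else 0) = if i = 1 then 0 else 1 := by
    intro i hi
    have hin := mem_range.mp hi
    rcases Nat.eq_zero_or_pos i with rfl | hpos
    · rw [bw_zero, bw_v2 1 (by omega) (by omega)]
      norm_num
    · rw [bw_v2 (i+1) (by omega) (by omega), bw_v2 i (by omega) (by omega)]
      split_ifs <;> omega
  rw [Finset.sum_congr rfl hterm, sum_ite_ne (n+3) 1 (by omega)]
  omega

lemma invB_u1 (n : ℕ) : invB (u1 n) = 1 := by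
  rw [invB_eq_sum]
  have p1 : ∀ i ∈ range (n+3), (∑ j ∈ range (n+3),
      if (i < j ∧ bw (u1 n) (j+1) < bw (u1 n) (i+1)) then (1:ℕ) else 0) = 0 := by
    intro i hi
    refine Finset.sum_eq_zero (fun j hj => ?_)
    have hi' := mem_range.mp hi
    have hj' := mem_range.mp hj
    rw [bw_u1 (j+1) (by omega) (by omega), bw_u1 (i+1) (by omega) (by omega)]
    rw [if_neg (by rintro ⟨h1, h2⟩; split_ifs at h2 <;> omega)]
  have p2 : ∀ i ∈ range (n+3), (∑ j ∈ range (n+3),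
      if (i < j ∧ bw (u1 n) (j+1) < -(bw (u1 n) (i+1))) then (1:ℕ) else 0) = 0 := by
    intro i hi
    refine Finset.sum_eq_zero (fun j hj => ?_)
    have hi' := mem_range.mp hi
    have hj' := mem_range.mp hj
    rw [bw_u1 (j+1) (by omega) (by omega), bw_u1 (i+1) (by omega) (by omega)]
    rw [if_neg (by rintro ⟨h1, h2⟩; split_ifs at h2 <;> omega)]
  have p3 : ∀ i ∈ range (n+3), (if bw (u1 n) (i+1) < 0 then (1:ℕ) else 0)
      = if i = 0 then 1 else 0 := by
    intro i hi
    have hi' := mem_range.mp hi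
    rw [bw_u1 (i+1) (by omega) (by omega)]
    split_ifs <;> omega
  rw [Finset.sum_congr rfl p1, Finset.sum_congr rfl p2, Finset.sum_congr rfl p3,
    sum_ite_eq_one (n+3) 0 (by omega)]
  simp

lemma invB_u2 (n : ℕ) : invB (u2 n) = 1 := by
  rw [invB_eq_sum]
  have p1 : ∀ i ∈ range (n+3), (∑ j ∈ range (n+3),
      if (i < j ∧ bw (u2 n) (j+1) < bw (u2 n) (i+1)) then (1:ℕ) else 0)
      = if i = 0 then 1 else 0 := by
    intro i hi
    have hi' := mem_range.mp hi
    have hterm : ∀ j ∈ range (n+3),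
        (if (i < j ∧ bw (u2 n) (j+1) < bw (u2 n) (i+1)) then (1:ℕ) else 0)
        = if (i = 0 ∧ j = 1) then 1 else 0 := by
      intro j hj
      have hj' := mem_range.mp hj
      rw [bw_u2 (j+1) (by omega) (by omega), bw_u2 (i+1) (by omega) (by omega)]
      split_ifs <;> omega
    rw [Finset.sum_congr rfl hterm]
    rcases Nat.eq_zero_or_pos i with rfl | hpos
    · rw [if_pos rfl]
      have h2 : ∀ j ∈ range (n+3), (if ((0:ℕ) = 0 ∧ j = 1) then (1:ℕ) else 0)
          = if j = 1 then 1 else 0 := by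
        intro j _
        split_ifs <;> omega
      rw [Finset.sum_congr rfl h2, sum_ite_eq_one (n+3) 1 (by omega)]
    · rw [if_neg (by omega)]
      refine Finset.sum_eq_zero (fun j _ => ?_)
      rw [if_neg (by rintro ⟨h1, -⟩; omega)]
  have p2 : ∀ i ∈ range (n+3), (∑ j ∈ range (n+3),
      if (i < j ∧ bw (u2 n) (j+1) < -(bw (u2 n) (i+1))) then (1:ℕ) else 0) = 0 := by
    intro i hi
    refine Finset.sum_eq_zero (fun j hj => ?_)
    have hi' := mem_range.mp hi
    have hj' := mem_range.mp hj
    rw [bw_u2 (j+1) (by omega) (by omega), bw_u2 (i+1) (by omega) (by omega)]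
    rw [if_neg (by rintro ⟨h1, h2⟩; split_ifs at h2 <;> omega)]
  have p3 : ∀ i ∈ range (n+3), (if bw (u2 n) (i+1) < 0 then (1:ℕ) else 0) = 0 := by
    intro i hi
    have hi' := mem_range.mp hi
    rw [bw_u2 (i+1) (by omega) (by omega)]
    rw [if_neg (by split_ifs <;> omega)]
  rw [Finset.sum_congr rfl p1, Finset.sum_congr rfl p2, Finset.sum_congr rfl p3,
    sum_ite_eq_one (n+3) 0 (by omega)]
  simp

lemma invB_v1 (n : ℕ) (hn : Even n) : Even (invB (v1 n)) := by
  rw [invB_eq_sum]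
  have p1 : ∀ i ∈ range (n+3), (∑ j ∈ range (n+3),
      if (i < j ∧ bw (v1 n) (j+1) < bw (v1 n) (i+1)) then (1:ℕ) else 0)
      = ∑ j ∈ range (n+3), if i < j then (1:ℕ) else 0 := by
    intro i hi
    refine Finset.sum_congr rfl (fun j hj => ?_)
    have hi' := mem_range.mp hi
    have hj' := mem_range.mp hj
    rw [bw_v1 (j+1) (by omega) (by omega), bw_v1 (i+1) (by omega) (by omega)]
    refine if_congr ⟨fun h => h.1, fun h => ⟨h, ?_⟩⟩ rfl rfl
    split_ifs <;> omega
  have p2 : ∀ i ∈ range (n+3), (∑ j ∈ range (n+3),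
      if (i < j ∧ bw (v1 n) (j+1) < -(bw (v1 n) (i+1))) then (1:ℕ) else 0)
      = ∑ j ∈ range (n+3), if i < j then (1:ℕ) else 0 := by
    intro i hi
    refine Finset.sum_congr rfl (fun j hj => ?_)
    have hi' := mem_range.mp hi
    have hj' := mem_range.mp hj
    rw [bw_v1 (j+1) (by omega) (by omega), bw_v1 (i+1) (by omega) (by omega)]
    refine if_congr ⟨fun h => h.1, fun h => ⟨h, ?_⟩⟩ rfl rfl
    split_ifs <;> omega
  have p3 : ∀ i ∈ range (n+3), (if bw (v1 n) (i+1) < 0 then (1:ℕ) else 0)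
      = if i = 0 then 0 else 1 := by
    intro i hi
    have hi' := mem_range.mp hi
    rw [bw_v1 (i+1) (by omega) (by omega)]
    split_ifs <;> omega
  rw [Finset.sum_congr rfl p1, Finset.sum_congr rfl p2, Finset.sum_congr rfl p3,
    sum_ite_ne (n+3) 0 (by omega)]
  obtain ⟨m, rfl⟩ := hn
  rw [Nat.even_iff]
  omega

lemma invB_v2 (n : ℕ) (hn : Even n) : Even (invB (v2 n)) := by
  rw [invB_eq_sum]
  have p1 : (∑ i ∈ range (n+3), ∑ j ∈ range (n+3),
      if (i < j ∧ bw (v2 n) (j+1) < bw (v2 n) (i+1)) then (1:ℕ) else 0) + 1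
      = ∑ i ∈ range (n+3), ∑ j ∈ range (n+3), if i < j then (1:ℕ) else 0 := by
    have hsplit : ∀ i ∈ range (n+3), ∀ j ∈ range (n+3),
        (if (i < j ∧ bw (v2 n) (j+1) < bw (v2 n) (i+1)) then (1:ℕ) else 0)
          + (if (i = 0 ∧ j = 1) then (1:ℕ) else 0)
        = if i < j then (1:ℕ) else 0 := by
      intro i hi j hj
      have hi' := mem_range.mp hi
      have hj' := mem_range.mp hj
      rw [bw_v2 (j+1) (by omega) (by omega), bw_v2 (i+1) (by omega) (by omega)]
      split_ifs <;> omega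
    have hone : (∑ i ∈ range (n+3), ∑ j ∈ range (n+3),
        if (i = 0 ∧ j = 1) then (1:ℕ) else 0) = 1 := by
      have hout : ∀ i ∈ range (n+3), (∑ j ∈ range (n+3),
          if (i = 0 ∧ j = 1) then (1:ℕ) else 0) = if i = 0 then 1 else 0 := by
        intro i _
        rcases Nat.eq_zero_or_pos i with rfl | hpos
        · rw [if_pos rfl]
          have h2 : ∀ j ∈ range (n+3), (if ((0:ℕ) = 0 ∧ j = 1) then (1:ℕ) else 0)
              = if j = 1 then 1 else 0 := by
            intro j _
            split_ifs <;> omega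
          rw [Finset.sum_congr rfl h2, sum_ite_eq_one (n+3) 1 (by omega)]
        · rw [if_neg (by omega)]
          refine Finset.sum_eq_zero (fun j _ => ?_)
          rw [if_neg (by rintro ⟨h1, -⟩; omega)]
      rw [Finset.sum_congr rfl hout, sum_ite_eq_one (n+3) 0 (by omega)]
    calc (∑ i ∈ range (n+3), ∑ j ∈ range (n+3),
        if (i < j ∧ bw (v2 n) (j+1) < bw (v2 n) (i+1)) then (1:ℕ) else 0) + 1
        = (∑ i ∈ range (n+3), ∑ j ∈ range (n+3),
            if (i < j ∧ bw (v2 n) (j+1) < bw (v2 n) (i+1)) then (1:ℕ) else 0)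
          + ∑ i ∈ range (n+3), ∑ j ∈ range (n+3), if (i = 0 ∧ j = 1) then (1:ℕ) else 0 := by
          rw [hone]
      _ = ∑ i ∈ range (n+3), ∑ j ∈ range (n+3), if i < j then (1:ℕ) else 0 := by
          rw [← Finset.sum_add_distrib]
          refine Finset.sum_congr rfl (fun i hi => ?_)
          rw [← Finset.sum_add_distrib]
          exact Finset.sum_congr rfl (fun j hj => hsplit i hi j hj)
  have p2 : ∀ i ∈ range (n+3), (∑ j ∈ range (n+3),
      if (i < j ∧ bw (v2 n) (j+1) < -(bw (v2 n) (i+1))) then (1:ℕ) else 0)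
      = ∑ j ∈ range (n+3), if i < j then (1:ℕ) else 0 := by
    intro i hi
    refine Finset.sum_congr rfl (fun j hj => ?_)
    have hi' := mem_range.mp hi
    have hj' := mem_range.mp hj
    rw [bw_v2 (j+1) (by omega) (by omega), bw_v2 (i+1) (by omega) (by omega)]
    refine if_congr ⟨fun h => h.1, fun h => ⟨h, ?_⟩⟩ rfl rfl
    split_ifs <;> omega
  have p3 : ∀ i ∈ range (n+3), (if bw (v2 n) (i+1) < 0 then (1:ℕ) else 0) = 1 := by
    intro i hi
    have hi' := mem_range.mp hi
    rw [bw_v2 (i+1) (by omega) (by omega)]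
    rw [if_pos (by split_ifs <;> omega)]
  rw [Finset.sum_congr rfl p2, Finset.sum_congr rfl p3]
  rw [Finset.sum_const, Finset.card_range, smul_eq_mul, mul_one]
  obtain ⟨m, rfl⟩ := hn
  rw [Nat.even_iff] at *
  omega

end TB12
namespace TB13
open Finset TB TB2 TB3 TB4 TB5 TB6 TB7 TB10 TB11 TB12 MvPolynomial

lemma coeff_filter {n : ℕ} (P : SignedPerm n → Prop) [DecidablePred P] (k : ℕ) :
    (∑ w ∈ Finset.univ.filter P, (Polynomial.X : Polynomial ℚ) ^ desB w).coeff k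
      = ((Finset.univ.filter (fun w => P w ∧ desB w = k)).card : ℚ) := by
  rw [Polynomial.finset_sum_coeff]
  have h1 : ∀ w ∈ Finset.univ.filter P, ((Polynomial.X : Polynomial ℚ)^desB w).coeff k
      = if desB w = k then 1 else 0 := by
    intro w _
    rw [Polynomial.coeff_X_pow]
    exact if_congr eq_comm rfl rfl
  rw [Finset.sum_congr rfl h1, Finset.sum_boole, Finset.filter_filter]

lemma odd_case (n : ℕ) (hodd : Odd (n+3)) :
    ¬ Palind (BuniP (n+3)) ∧ ¬ Palind (BuniM (n+3)) := by
  have hEn : Even n := by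
    rw [Nat.even_iff]
    obtain ⟨m, hm⟩ := hodd
    omega
  have cP : ∀ k, (BuniP (n+3)).coeff k
      = ((Finset.univ.filter (fun w : SignedPerm (n+3) =>
          Even (invB w) ∧ desB w = k)).card : ℚ) := by
    intro k
    rw [BuniP, coeff_filter]
  have cM : ∀ k, (BuniM (n+3)).coeff k
      = ((Finset.univ.filter (fun w : SignedPerm (n+3) =>
          ¬ Even (invB w) ∧ desB w = k)).card : ℚ) := by
    intro k
    rw [BuniM, coeff_filter]
  -- extreme coefficients
  have h0P : Finset.univ.filter (fun w : SignedPerm (n+3) =>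
      Even (invB w) ∧ desB w = 0) = {idp (n+3)} := by
    ext w
    simp only [mem_filter, mem_univ, true_and, mem_singleton]
    constructor
    · rintro ⟨-, h2⟩
      exact desB_zero_unique w h2
    · rintro rfl
      exact ⟨by rw [invB_idp]; exact ⟨0, rfl⟩, desB_idp _⟩
  have h0M : Finset.univ.filter (fun w : SignedPerm (n+3) =>
      ¬ Even (invB w) ∧ desB w = 0) = ∅ := by
    rw [Finset.filter_eq_empty_iff]
    rintro w - ⟨h1, h2⟩
    rw [desB_zero_unique w h2] at h1
    exact h1 (by rw [invB_idp]; exact ⟨0, rfl⟩)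
  have hNM : Finset.univ.filter (fun w : SignedPerm (n+3) =>
      ¬ Even (invB w) ∧ desB w = n+3) = {wneg (n+3)} := by
    ext w
    simp only [mem_filter, mem_univ, true_and, mem_singleton]
    constructor
    · rintro ⟨-, h2⟩
      exact desB_n_unique w h2
    · rintro rfl
      exact ⟨invB_wneg (n+3) hodd, desB_wneg _⟩
  have htopP : ∀ k, n+2 < k → (BuniP (n+3)).coeff k = 0 := by
    intro k hk
    rw [cP]
    have hempty : Finset.univ.filter (fun w : SignedPerm (n+3) =>
        Even (invB w) ∧ desB w = k) = ∅ := by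
      rw [Finset.filter_eq_empty_iff]
      rintro w - ⟨h1, h2⟩
      have hle := desB_le w
      rcases eq_or_ne k (n+3) with rfl | hne
      · rw [desB_n_unique w h2] at h1
        exact invB_wneg (n+3) hodd h1
      · omega
    rw [hempty]
    simp
  have htopM : ∀ k, n+3 < k → (BuniM (n+3)).coeff k = 0 := by
    intro k hk
    rw [cM]
    have hempty : Finset.univ.filter (fun w : SignedPerm (n+3) =>
        ¬ Even (invB w) ∧ desB w = k) = ∅ := by
      rw [Finset.filter_eq_empty_iff]
      rintro w - ⟨h1, h2⟩
      have hle := desB_le w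
      omega
    rw [hempty]
    simp
  -- the two-element bounds
  have hv12 : v1 n ≠ v2 n := by
    intro h
    have h2 := congrArg (fun w : SignedPerm (n+3) => w.2 ⟨0, by omega⟩) h
    simp [v1, v2] at h2
  have hu12 : u1 n ≠ u2 n := by
    intro h
    have h2 := congrArg (fun w : SignedPerm (n+3) => w.2 ⟨0, by omega⟩) h
    simp [u1, u2] at h2
  have hsubP : ({v1 n, v2 n} : Finset (SignedPerm (n+3)))
      ⊆ Finset.univ.filter (fun w => Even (invB w) ∧ desB w = n+2) := by
    rw [Finset.insert_subset_iff, Finset.singleton_subset_iff]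
    constructor
    · exact mem_filter.mpr ⟨mem_univ _, invB_v1 n hEn, desB_v1 n⟩
    · exact mem_filter.mpr ⟨mem_univ _, invB_v2 n hEn, desB_v2 n⟩
  have hsubM : ({u1 n, u2 n} : Finset (SignedPerm (n+3)))
      ⊆ Finset.univ.filter (fun w => ¬ Even (invB w) ∧ desB w = 1) := by
    rw [Finset.insert_subset_iff, Finset.singleton_subset_iff]
    constructor
    · refine mem_filter.mpr ⟨mem_univ _, ?_, desB_u1 n⟩
      rw [invB_u1]
      decide
    · refine mem_filter.mpr ⟨mem_univ _, ?_, desB_u2 n⟩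
      rw [invB_u2]
      decide
  have hcard2P : 2 ≤ (Finset.univ.filter (fun w : SignedPerm (n+3) =>
      Even (invB w) ∧ desB w = n+2)).card := by
    calc 2 = ({v1 n, v2 n} : Finset (SignedPerm (n+3))).card := (Finset.card_pair hv12).symm
      _ ≤ _ := Finset.card_le_card hsubP
  have hcard2M : 2 ≤ (Finset.univ.filter (fun w : SignedPerm (n+3) =>
      ¬ Even (invB w) ∧ desB w = 1)).card := by
    calc 2 = ({u1 n, u2 n} : Finset (SignedPerm (n+3))).card := (Finset.card_pair hu12).symm
      _ ≤ _ := Finset.card_le_card hsubM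
  -- polynomial facts
  have hc0P : (BuniP (n+3)).coeff 0 = 1 := by
    rw [cP 0, h0P, Finset.card_singleton]
    norm_num
  have hc0M : (BuniM (n+3)).coeff 0 = 0 := by
    rw [cM 0, h0M]
    simp
  have hcNM : (BuniM (n+3)).coeff (n+3) = 1 := by
    rw [cM (n+3), hNM, Finset.card_singleton]
    norm_num
  have hc1M : (BuniM (n+3)).coeff 1
      = ((Finset.univ.filter (fun w : SignedPerm (n+3) =>
          ¬ Even (invB w) ∧ desB w = 1)).card : ℚ) := cM 1
  have hcn2P : (BuniP (n+3)).coeff (n+2)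
      = ((Finset.univ.filter (fun w : SignedPerm (n+3) =>
          Even (invB w) ∧ desB w = n+2)).card : ℚ) := cP (n+2)
  have hneP : BuniP (n+3) ≠ 0 := by
    intro h
    rw [h] at hc0P
    simp at hc0P
  have hneM : BuniM (n+3) ≠ 0 := by
    intro h
    rw [h] at hcNM
    simp at hcNM
  have hntdP : (BuniP (n+3)).natTrailingDegree = 0 :=
    Nat.le_zero.mp (Polynomial.natTrailingDegree_le_of_ne_zero (by rw [hc0P]; norm_num))
  have hdegP : (BuniP (n+3)).natDegree = n+2 := by
    apply le_antisymm
    · exact Polynomial.natDegree_le_iff_coeff_eq_zero.mpr htopP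
    · apply Polynomial.le_natDegree_of_ne_zero
      rw [hcn2P]
      exact Nat.cast_ne_zero.mpr (by omega)
  have hntdM : (BuniM (n+3)).natTrailingDegree = 1 := by
    apply le_antisymm
    · apply Polynomial.natTrailingDegree_le_of_ne_zero
      rw [hc1M]
      exact Nat.cast_ne_zero.mpr (by omega)
    · apply Polynomial.le_natTrailingDegree hneM
      intro m hm
      have hm0 : m = 0 := by omega
      rw [hm0]
      exact hc0M
  have hdegM : (BuniM (n+3)).natDegree = n+3 := by
    apply le_antisymm
    · exact Polynomial.natDegree_le_iff_coeff_eq_zero.mpr htopM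
    · apply Polynomial.le_natDegree_of_ne_zero
      rw [hcNM]
      norm_num
  constructor
  · intro hPal
    have h := hPal 0 (by omega)
    rw [hntdP, hdegP] at h
    simp only [Nat.add_zero, Nat.sub_zero] at h
    rw [hc0P, hcn2P] at h
    have hcard : (Finset.univ.filter (fun w : SignedPerm (n+3) =>
        Even (invB w) ∧ desB w = n+2)).card = 1 := by exact_mod_cast h.symm
    omega
  · intro hPal
    have h := hPal 0 (by omega)
    rw [hntdM, hdegM] at h
    simp only [Nat.add_zero, Nat.sub_zero] at h
    rw [hc1M, hcNM] at h
    have hcard : (Finset.univ.filter (fun w : SignedPerm (n+3) =>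
        ¬ Even (invB w) ∧ desB w = 1)).card = 1 := by exact_mod_cast h
    omega

end TB13


theorem typeB_gamma_positive_iff_even (n : ℕ) (hn : 2 ≤ n) :
    (Even n → BivGamma (BbivP n) n ∧ BivGamma (BbivM n) n) ∧
    (Odd n → ¬ Palind (BuniP n) ∧ ¬ Palind (BuniM n)) := by
  constructor
  · intro he
    exact TB9.even_case n he
  · intro ho
    obtain ⟨m, rfl⟩ : ∃ m, n = m + 3 := by
      refine ⟨n - 3, ?_⟩
      obtain ⟨k, hk⟩ := ho
      omega
    exact TB13.odd_case m ho
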